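/- arXiv:math/0003077 — 5 statements merged into one kernel-verified Lean document; each statement's English description precedes it below -/
import Mathlib

section
/- The number of pairs (α, β) of families of natural numbers α_{k,j}, β_{k,j} (indexed over 1 ≤ k ≤ l and 1 ≤ j ≤ s_k) satisfying, for each i = 1,...,l, the relation Σ_{k=i}^{l} Σ_{j=1}^{s_i} (α_{k,j} + β_{k,j}) = d_i, equals the coefficient of t_1^{d_1}···t_l^{d_l} in the formal power series ∏_{1 ≤ i ≤ j ≤ l} (1 - t_i t_{i+1} ··· t_j)^{-2(s_i - s_{i-1})}. -/
/-- Pairs `(i,j)` with `1 ≤ i ≤ j ≤ l`. -/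
def pairsSet (l : ℕ) : Finset (ℕ × ℕ) :=
  (Finset.Icc 1 l ×ˢ Finset.Icc 1 l).filter fun p => p.1 ≤ p.2

noncomputable section AuxS1

open Finset MvPowerSeries

/-- Index type: a pair `(a,k)` together with a slot `(j, tag)`. -/
abbrev Idx1 : Type := Σ _ : ℕ × ℕ, ℕ × ℕ

/-- The exponent vector of `t_a ⋯ t_k`. -/
def eVec (p : ℕ × ℕ) : ℕ →₀ ℕ := ∑ r ∈ Finset.Icc p.1 p.2, Finsupp.single r 1

lemma eVec_apply (p : ℕ × ℕ) (r : ℕ) :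
    eVec p r = if r ∈ Finset.Icc p.1 p.2 then 1 else 0 := by
  classical
  simp [eVec, Finsupp.finset_sum_apply, Finsupp.single_apply]

open scoped Classical in
/-- The geometric series `Σ_n (monomial (n • E) 1)`. -/
def geomS (E : ℕ →₀ ℕ) : MvPowerSeries ℕ ℚ := fun f => if ∃ n : ℕ, f = n • E then 1 else 0

open scoped Classical in
lemma coeff_geomS (E f : ℕ →₀ ℕ) :
    MvPowerSeries.coeff f (geomS E) = if ∃ n : ℕ, f = n • E then 1 else 0 :=
  rfl

lemma geomS_eq_inv (E : ℕ →₀ ℕ) (hE : E ≠ 0) :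
    (1 - MvPowerSeries.monomial E 1)⁻¹ = geomS E := by
  classical
  have hc : MvPowerSeries.constantCoeff (1 - MvPowerSeries.monomial E (1 : ℚ)) ≠ 0 := by
    have h1 : MvPowerSeries.constantCoeff (MvPowerSeries.monomial E (1 : ℚ)) = 0 := by
      rw [← MvPowerSeries.coeff_zero_eq_constantCoeff_apply]
      exact MvPowerSeries.coeff_monomial_ne (Ne.symm hE) 1
    rw [map_sub, map_one, h1, sub_zero]
    exact one_ne_zero
  rw [MvPowerSeries.inv_eq_iff_mul_eq_one hc]
  ext f
  rw [mul_sub, mul_one, map_sub, MvPowerSeries.coeff_mul_monomial,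
    MvPowerSeries.coeff_one]
  simp only [coeff_geomS]
  by_cases h0f : f = 0
  · subst h0f
    rw [if_pos ⟨0, (zero_smul ℕ E).symm⟩, if_pos rfl, if_neg, sub_zero]
    intro hle
    exact hE (nonpos_iff_eq_zero.mp hle)
  · rw [if_neg h0f]
    by_cases hdvd : ∃ n : ℕ, f = n • E
    · obtain ⟨n, rfl⟩ := hdvd
      have hn : n ≠ 0 := by rintro rfl; exact h0f (zero_smul ℕ E)
      obtain ⟨m, rfl⟩ := Nat.exists_eq_succ_of_ne_zero hn
      have hle : E ≤ (m + 1) • E := by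
        rw [succ_nsmul]; exact le_add_self
      rw [if_pos ⟨m + 1, rfl⟩, if_pos hle,
        if_pos ⟨m, by rw [succ_nsmul, add_tsub_cancel_right]⟩]
      ring
    · rw [if_neg hdvd]
      have h2 : (if E ≤ f then (if ∃ n : ℕ, f - E = n • E then (1 : ℚ) else 0) * 1 else 0)
          = 0 := by
        split_ifs with hle hd
        · obtain ⟨j, hj⟩ := hd
          exact absurd ⟨j + 1, by rw [succ_nsmul, ← hj, tsub_add_cancel_of_le hle]⟩ hdvd
        · ring
        · rfl
      rw [h2, sub_zero]

lemma prod_X_mon (t : Finset ℕ) :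
    (∏ r ∈ t, (MvPowerSeries.X r : MvPowerSeries ℕ ℚ)) =
      MvPowerSeries.monomial (∑ r ∈ t, Finsupp.single r 1) 1 := by
  classical
  induction t using Finset.induction_on with
  | empty => simp
  | insert a u h ih =>
      rw [Finset.prod_insert h, Finset.sum_insert h, ih, MvPowerSeries.X_def,
        MvPowerSeries.monomial_mul_monomial, one_mul]

lemma prod_X_eq_monomial (a b : ℕ) :
    (∏ r ∈ Finset.Icc a b, (MvPowerSeries.X r : MvPowerSeries ℕ ℚ)) =
      MvPowerSeries.monomial (eVec (a, b)) 1 :=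
  prod_X_mon _

/-- The index finset. -/
def slotF (s : ℕ → ℕ) (l : ℕ) : Finset Idx1 :=
  (pairsSet l).sigma fun p => Finset.Ioc (s (p.1 - 1)) (s p.1) ×ˢ ({0, 1} : Finset ℕ)

lemma mem_slotF (s : ℕ → ℕ) (l : ℕ) (x : Idx1) :
    x ∈ slotF s l ↔ (1 ≤ x.1.1 ∧ x.1.1 ≤ l ∧ 1 ≤ x.1.2 ∧ x.1.2 ≤ l ∧ x.1.1 ≤ x.1.2) ∧
      (s (x.1.1 - 1) < x.2.1 ∧ x.2.1 ≤ s x.1.1) ∧ (x.2.2 = 0 ∨ x.2.2 = 1) := by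
  obtain ⟨⟨a, k⟩, j, t⟩ := x
  simp [slotF, pairsSet, Finset.mem_sigma, Finset.mem_filter, Finset.mem_product,
    Finset.mem_Icc, Finset.mem_Ioc]
  tauto

/-- The multiplicity attached to an index. -/
def nmap (α β : ℕ → ℕ → ℕ) (x : Idx1) : ℕ :=
  if x.2.2 = 0 then α x.1.2 x.2.1 else β x.1.2 x.2.1

section WithS

variable {s : ℕ → ℕ} {l : ℕ}

lemma s_mono (hmono : ∀ i < l, s i < s (i + 1)) :
    ∀ a b : ℕ, a ≤ b → b ≤ l → s a ≤ s b := by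
  intro a b hab hbl
  induction b, hab using Nat.le_induction with
  | base => exact le_rfl
  | succ b hab ih =>
      exact le_trans (ih (by omega)) (le_of_lt (hmono b (by omega)))

lemma level_exists_unique (h0 : s 0 = 0) (hmono : ∀ i < l, s i < s (i + 1))
    {k j : ℕ} (hk1 : 1 ≤ k) (hkl : k ≤ l) (hj1 : 1 ≤ j) (hjk : j ≤ s k) :
    ∃! a : ℕ, 1 ≤ a ∧ a ≤ k ∧ s (a - 1) < j ∧ j ≤ s a := by
  have hex : ∃ a, j ≤ s a := ⟨k, hjk⟩
  set a₀ := Nat.find hex with ha₀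
  have hspec : j ≤ s a₀ := Nat.find_spec hex
  have ha₀k : a₀ ≤ k := Nat.find_min' hex hjk
  have ha₀1 : 1 ≤ a₀ := by
    rcases Nat.eq_zero_or_pos a₀ with h | h
    · rw [h, h0] at hspec; omega
    · exact h
  have hlt : s (a₀ - 1) < j := by
    have := Nat.find_min hex (m := a₀ - 1) (by omega)
    omega
  refine ⟨a₀, ⟨ha₀1, ha₀k, hlt, hspec⟩, ?_⟩
  rintro a ⟨ha1, hak, halt, hale⟩
  by_contra hne
  rcases Nat.lt_or_ge a a₀ with h | h
  · have : s a ≤ s (a₀ - 1) := s_mono hmono a (a₀ - 1) (by omega) (by omega)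
    omega
  · have : s a₀ ≤ s (a - 1) := s_mono hmono a₀ (a - 1) (by omega) (by omega)
    omega

lemma not_mem_slotF (hmono : ∀ i < l, s i < s (i + 1)) (a k j t : ℕ)
    (hbad : k < 1 ∨ l < k ∨ j < 1 ∨ s k < j) : (⟨(a, k), (j, t)⟩ : Idx1) ∉ slotF s l := by
  intro hmem
  rw [mem_slotF] at hmem
  dsimp only at hmem
  obtain ⟨⟨ha1, hal, hk1, hkl, hak⟩, ⟨hj1, hj2⟩, _⟩ := hmem
  have := s_mono hmono a k hak hkl
  omega

lemma telescope (h0 : s 0 = 0) (hmono : ∀ i < l, s i < s (i + 1)) (g : ℕ → ℕ) :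
    ∀ r, r ≤ l → ∑ a ∈ Finset.Icc 1 r, ∑ j ∈ Finset.Ioc (s (a - 1)) (s a), g j
      = ∑ j ∈ Finset.Icc 1 (s r), g j := by
  intro r
  induction r with
  | zero => intro _; simp [h0]
  | succ r ih =>
      intro hrl
      rw [Finset.sum_Icc_succ_top (by omega : 1 ≤ r + 1), ih (by omega)]
      have h1 : r + 1 - 1 = r := rfl
      rw [h1]
      have e1 : Finset.Icc 1 (s r) = Finset.Ioc 0 (s r) := by
        ext x; simp [Finset.mem_Icc, Finset.mem_Ioc]; omega
      have e2 : Finset.Icc 1 (s (r + 1)) = Finset.Ioc 0 (s (r + 1)) := by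
        ext x; simp [Finset.mem_Icc, Finset.mem_Ioc]; omega
      rw [e1, e2,
        Finset.sum_Ioc_consecutive g (Nat.zero_le _) (s_mono hmono r (r + 1) (by omega) hrl)]

lemma key_sum (h0 : s 0 = 0) (hmono : ∀ i < l, s i < s (i + 1)) (α β : ℕ → ℕ → ℕ) (r : ℕ) :
    (∑ x ∈ slotF s l, nmap α β x • eVec x.1) r =
      if 1 ≤ r ∧ r ≤ l then
        ∑ k ∈ Finset.Icc r l, ∑ j ∈ Finset.Icc 1 (s r), (α k j + β k j)
      else 0 := by
  classical
  rw [Finsupp.finset_sum_apply]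
  simp only [Finsupp.smul_apply, smul_eq_mul, eVec_apply]
  rw [slotF, Finset.sum_sigma]
  simp only [Finset.sum_product, Finset.sum_pair (by norm_num : (0 : ℕ) ≠ 1)]
  simp only [nmap, reduceIte, show ((1:ℕ) = 0) = False from by simp, if_false]
  have hsummand : ∀ p ∈ pairsSet l,
      (∑ j ∈ Finset.Ioc (s (p.1 - 1)) (s p.1),
        (α p.2 j * (if r ∈ Finset.Icc p.1 p.2 then 1 else 0) +
         β p.2 j * (if r ∈ Finset.Icc p.1 p.2 then 1 else 0))) =
      if r ∈ Finset.Icc p.1 p.2 then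
        ∑ j ∈ Finset.Ioc (s (p.1 - 1)) (s p.1), (α p.2 j + β p.2 j) else 0 := by
    intro p _
    split_ifs with h
    · simp
    · simp
  rw [Finset.sum_congr rfl hsummand, ← Finset.sum_filter]
  by_cases hr : 1 ≤ r ∧ r ≤ l
  · rw [if_pos hr]
    have hPf : (pairsSet l).filter (fun p => r ∈ Finset.Icc p.1 p.2) =
        Finset.Icc 1 r ×ˢ Finset.Icc r l := by
      ext p
      simp only [pairsSet, Finset.mem_filter, Finset.mem_product, Finset.mem_Icc]
      omega
    rw [hPf, Finset.sum_product, Finset.sum_comm]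
    refine Finset.sum_congr rfl fun k hk => ?_
    exact telescope h0 hmono (fun j => α k j + β k j) r hr.2
  · rw [if_neg hr]
    have hempty : (pairsSet l).filter (fun p => r ∈ Finset.Icc p.1 p.2) = ∅ := by
      ext p
      simp only [pairsSet, Finset.mem_filter, Finset.mem_product, Finset.mem_Icc,
        Finset.notMem_empty, iff_false, not_and]
      omega
    rw [hempty, Finset.sum_empty]

lemma Dvec_apply (l : ℕ) (d : ℕ → ℕ) (r : ℕ) :
    (∑ i ∈ Finset.Icc 1 l, Finsupp.single i (d i)) r = if 1 ≤ r ∧ r ≤ l then d r else 0 := by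
  classical
  rw [Finsupp.finset_sum_apply]
  simp only [Finsupp.single_apply]
  rw [Finset.sum_ite_eq' (Finset.Icc 1 l) r d]
  simp [Finset.mem_Icc]

/-- The forward map on the `u`-side. -/
def phiF (s : ℕ → ℕ) (l : ℕ) (α β : ℕ → ℕ → ℕ) : Idx1 →₀ (ℕ →₀ ℕ) :=
  ∑ x ∈ slotF s l, Finsupp.single x (nmap α β x • eVec x.1)

lemma phiF_apply (α β : ℕ → ℕ → ℕ) (x : Idx1) :
    phiF s l α β x = if x ∈ slotF s l then nmap α β x • eVec x.1 else 0 := by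
  classical
  rw [phiF, Finsupp.finset_sum_apply]
  simp only [Finsupp.single_apply]
  rw [Finset.sum_ite_eq' (slotF s l) x (fun y => nmap α β y • eVec y.1)]

lemma phiF_support (α β : ℕ → ℕ → ℕ) : (phiF s l α β).support ⊆ slotF s l := by
  intro x hx
  rw [Finsupp.mem_support_iff] at hx
  by_contra h
  rw [phiF_apply, if_neg h] at hx
  exact hx rfl

lemma phiF_sum_apply (h0 : s 0 = 0) (hmono : ∀ i < l, s i < s (i + 1))
    (α β : ℕ → ℕ → ℕ) (r : ℕ) :
    (∑ x ∈ slotF s l, phiF s l α β x) r =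
      if 1 ≤ r ∧ r ≤ l then
        ∑ k ∈ Finset.Icc r l, ∑ j ∈ Finset.Icc 1 (s r), (α k j + β k j)
      else 0 := by
  have h : ∑ x ∈ slotF s l, phiF s l α β x = ∑ x ∈ slotF s l, nmap α β x • eVec x.1 :=
    Finset.sum_congr rfl fun x hx => by rw [phiF_apply, if_pos hx]
  rw [h]
  exact key_sum h0 hmono α β r

lemma sumCollapse1 (h0 : s 0 = 0) (hmono : ∀ i < l, s i < s (i + 1))
    (u : Idx1 →₀ (ℕ →₀ ℕ)) (hsupp : u.support ⊆ slotF s l)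
    {a k j t : ℕ} (hx : (⟨(a, k), (j, t)⟩ : Idx1) ∈ slotF s l) :
    (∑ a' ∈ Finset.Icc 1 l, u ⟨(a', k), (j, t)⟩ a') = u ⟨(a, k), (j, t)⟩ a := by
  have hxm := (mem_slotF s l _).mp hx
  dsimp only at hxm
  obtain ⟨⟨ha1, hal, hk1, hkl, hak⟩, ⟨hj1, hj2⟩, ht⟩ := hxm
  have hjk : j ≤ s k := le_trans hj2 (s_mono hmono a k hak hkl)
  obtain ⟨a₀, ha₀, huniq⟩ := level_exists_unique h0 hmono hk1 hkl (by omega) hjk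
  have haa₀ : a = a₀ := huniq a ⟨ha1, hak, hj1, hj2⟩
  refine Finset.sum_eq_single_of_mem a (Finset.mem_Icc.mpr ⟨ha1, le_trans hak hkl⟩) ?_
  intro a' ha' hne
  by_cases hx' : (⟨(a', k), (j, t)⟩ : Idx1) ∈ slotF s l
  · exfalso
    have hx'm := (mem_slotF s l _).mp hx'
    dsimp only at hx'm
    obtain ⟨⟨ha1', _, _, _, hak'⟩, ⟨hj1', hj2'⟩, _⟩ := hx'm
    exact hne ((huniq a' ⟨ha1', hak', hj1', hj2'⟩).trans haa₀.symm)
  · have hz : u ⟨(a', k), (j, t)⟩ = 0 :=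
      Finsupp.notMem_support_iff.mp fun hmem => hx' (hsupp hmem)
    rw [hz]
    rfl

lemma round_trip (h0 : s 0 = 0) (hmono : ∀ i < l, s i < s (i + 1))
    (u : Idx1 →₀ (ℕ →₀ ℕ)) (hsupp : u.support ⊆ slotF s l)
    (hcond : ∀ x ∈ slotF s l, ∃ n : ℕ, u x = n • eVec x.1) :
    phiF s l (fun k j => ∑ a ∈ Finset.Icc 1 l, u ⟨(a, k), (j, 0)⟩ a)
      (fun k j => ∑ a ∈ Finset.Icc 1 l, u ⟨(a, k), (j, 1)⟩ a) = u := by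
  refine Finsupp.ext fun x => ?_
  rw [phiF_apply]
  by_cases hx : x ∈ slotF s l
  · rw [if_pos hx]
    obtain ⟨⟨a, k⟩, j, t⟩ := x
    obtain ⟨n, hn⟩ := hcond _ hx
    have hxm := (mem_slotF s l _).mp hx
    dsimp only at hxm
    obtain ⟨⟨ha1, hal, hk1, hkl, hak⟩, ⟨hj1, hj2⟩, ht⟩ := hxm
    have hna : u ⟨(a, k), (j, t)⟩ a = n := by
      rw [hn, Finsupp.smul_apply, eVec_apply, if_pos (Finset.mem_Icc.mpr ⟨le_rfl, hak⟩)]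
      simp
    have hnm : nmap (fun k j => ∑ a ∈ Finset.Icc 1 l, u ⟨(a, k), (j, 0)⟩ a)
        (fun k j => ∑ a ∈ Finset.Icc 1 l, u ⟨(a, k), (j, 1)⟩ a) ⟨(a, k), (j, t)⟩ = n := by
      rcases ht with ht | ht <;> subst ht
      · rw [nmap]
        dsimp only
        rw [if_pos rfl, sumCollapse1 h0 hmono u hsupp hx, hna]
      · rw [nmap]
        dsimp only
        rw [if_neg one_ne_zero, sumCollapse1 h0 hmono u hsupp hx, hna]
    rw [hnm, hn]
  · rw [if_neg hx]
    exact (Finsupp.notMem_support_iff.mp fun hm => hx (hsupp hm)).symm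

end WithS

end AuxS1

set_option maxHeartbeats 2000000 in
/-- The number of pairs `(α, β)` of families of natural numbers indexed by `1 ≤ k ≤ l`,
`1 ≤ j ≤ s k` (extended by zero outside that range) satisfying
`Σ_{k=i}^l Σ_{j=1}^{s_i} (α_{k,j} + β_{k,j}) = d_i` for each `i = 1,...,l`, equals the
coefficient of `t_1^{d_1}···t_l^{d_l}` in `∏_{1≤i≤j≤l} (1 - t_i···t_j)^{-2(s_i - s_{i-1})}`,
a formal power series in variables `t_1, ..., t_l` (here `t_i` is `X i`). -/
theorem stmt1 (l : ℕ) (s : ℕ → ℕ) (h0 : s 0 = 0) (hmono : ∀ i < l, s i < s (i + 1))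
    (d : ℕ → ℕ) :
    (Nat.card {p : (ℕ → ℕ → ℕ) × (ℕ → ℕ → ℕ) //
      (∀ k j : ℕ, (k < 1 ∨ l < k ∨ j < 1 ∨ s k < j) → p.1 k j = 0 ∧ p.2 k j = 0) ∧
      ∀ i ∈ Finset.Icc 1 l,
        (∑ k ∈ Finset.Icc i l, ∑ j ∈ Finset.Icc 1 (s i), (p.1 k j + p.2 k j)) = d i} : ℚ) =
    MvPowerSeries.coeff (∑ i ∈ Finset.Icc 1 l, Finsupp.single i (d i))
      (∏ p ∈ pairsSet l,
        ((1 - ∏ r ∈ Finset.Icc p.1 p.2, (MvPowerSeries.X r : MvPowerSeries ℕ ℚ))⁻¹) ^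
          (2 * (s p.1 - s (p.1 - 1)))) := by
  classical
  set D : ℕ →₀ ℕ := ∑ i ∈ Finset.Icc 1 l, Finsupp.single i (d i) with hD
  set T : Finset (Idx1 →₀ (ℕ →₀ ℕ)) :=
    ((slotF s l).finsuppAntidiag D).filter
      (fun u => ∀ x ∈ slotF s l, ∃ n : ℕ, u x = n • eVec x.1) with hT
  -- Step 1: the coefficient equals `T.card`.
  have hgeom : ∀ p ∈ pairsSet l,
      ((1 - ∏ r ∈ Finset.Icc p.1 p.2, (MvPowerSeries.X r : MvPowerSeries ℕ ℚ))⁻¹) ^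
          (2 * (s p.1 - s (p.1 - 1))) =
        ∏ _c ∈ Finset.Ioc (s (p.1 - 1)) (s p.1) ×ˢ ({0, 1} : Finset ℕ), geomS (eVec p) := by
    rintro ⟨a, b⟩ hp
    rw [pairsSet, Finset.mem_filter, Finset.mem_product, Finset.mem_Icc, Finset.mem_Icc] at hp
    dsimp only at hp ⊢
    have hene : eVec (a, b) ≠ 0 := by
      intro h
      have h2 := eVec_apply (a, b) a
      rw [h] at h2
      simp only [Finsupp.coe_zero, Pi.zero_apply] at h2
      rw [if_pos (Finset.mem_Icc.mpr ⟨le_rfl, hp.2⟩)] at h2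
      exact one_ne_zero h2.symm
    rw [prod_X_eq_monomial, geomS_eq_inv _ hene, Finset.prod_const, Finset.card_product,
      Nat.card_Ioc]
    have hc2 : ({0, 1} : Finset ℕ).card = 2 := by decide
    rw [hc2, Nat.mul_comm]
  have hRHS : (MvPowerSeries.coeff D)
      (∏ p ∈ pairsSet l,
        ((1 - ∏ r ∈ Finset.Icc p.1 p.2, (MvPowerSeries.X r : MvPowerSeries ℕ ℚ))⁻¹) ^
          (2 * (s p.1 - s (p.1 - 1)))) = (T.card : ℚ) := by
    rw [Finset.prod_congr rfl hgeom, Finset.prod_sigma']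
    have hFdef : ((pairsSet l).sigma
        (fun p => Finset.Ioc (s (p.1 - 1)) (s p.1) ×ˢ ({0, 1} : Finset ℕ))) = slotF s l := rfl
    rw [hFdef, MvPowerSeries.coeff_prod]
    simp only [coeff_geomS]
    have hsum : ∀ u ∈ (slotF s l).finsuppAntidiag D,
        (∏ x ∈ slotF s l, if ∃ n : ℕ, u x = n • eVec x.1 then (1 : ℚ) else 0) =
          if ∀ x ∈ slotF s l, ∃ n : ℕ, u x = n • eVec x.1 then (1 : ℚ) else 0 :=
      fun u _ => Finset.prod_boole
    rw [Finset.sum_congr rfl hsum, Finset.sum_boole, hT]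
  rw [hRHS]
  rw [Nat.cast_inj]
  -- Step 2: membership of the forward map.
  have hmem_phi : ∀ α β : ℕ → ℕ → ℕ,
      (∀ i ∈ Finset.Icc 1 l,
        (∑ k ∈ Finset.Icc i l, ∑ j ∈ Finset.Icc 1 (s i), (α k j + β k j)) = d i) →
      phiF s l α β ∈ T := by
    intro α β hcons
    rw [hT, Finset.mem_filter, Finset.mem_finsuppAntidiag]
    refine ⟨⟨?_, phiF_support α β⟩, fun x hx => ⟨nmap α β x, by rw [phiF_apply, if_pos hx]⟩⟩
    refine Finsupp.ext fun r => ?_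
    show (∑ x ∈ slotF s l, phiF s l α β x) r = D r
    rw [phiF_sum_apply h0 hmono α β r, hD, Dvec_apply l d r]
    by_cases hr : 1 ≤ r ∧ r ≤ l
    · rw [if_pos hr, if_pos hr]
      exact hcons r (Finset.mem_Icc.mpr hr)
    · rw [if_neg hr, if_neg hr]
  have hTfacts : ∀ u ∈ T, u.support ⊆ slotF s l ∧
      (∀ x ∈ slotF s l, ∃ n : ℕ, u x = n • eVec x.1) ∧
      (∑ x ∈ slotF s l, u x) = D := by
    intro u hu
    rw [hT, Finset.mem_filter, Finset.mem_finsuppAntidiag] at hu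
    exact ⟨hu.1.2, hu.2, hu.1.1⟩
  -- Step 3: backward map lands in the subtype.
  have hback : ∀ u ∈ T,
      ((∀ k j : ℕ, (k < 1 ∨ l < k ∨ j < 1 ∨ s k < j) →
          (∑ a ∈ Finset.Icc 1 l, u ⟨(a, k), (j, 0)⟩ a) = 0 ∧
          (∑ a ∈ Finset.Icc 1 l, u ⟨(a, k), (j, 1)⟩ a) = 0) ∧
        ∀ i ∈ Finset.Icc 1 l,
          (∑ k ∈ Finset.Icc i l, ∑ j ∈ Finset.Icc 1 (s i),
            ((∑ a ∈ Finset.Icc 1 l, u ⟨(a, k), (j, 0)⟩ a) +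
             (∑ a ∈ Finset.Icc 1 l, u ⟨(a, k), (j, 1)⟩ a))) = d i) := by
    intro u hu
    obtain ⟨hsupp, hcond, hsum⟩ := hTfacts u hu
    constructor
    · intro k j hbad
      refine ⟨Finset.sum_eq_zero fun a _ => ?_, Finset.sum_eq_zero fun a _ => ?_⟩
      · have hz : u ⟨(a, k), (j, 0)⟩ = 0 := Finsupp.notMem_support_iff.mp fun hm =>
          not_mem_slotF hmono a k j 0 hbad (hsupp hm)
        rw [hz]
        rfl
      · have hz : u ⟨(a, k), (j, 1)⟩ = 0 := Finsupp.notMem_support_iff.mp fun hm =>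
          not_mem_slotF hmono a k j 1 hbad (hsupp hm)
        rw [hz]
        rfl
    · intro i hi
      have hrt := round_trip h0 hmono u hsupp hcond
      have h2 := phiF_sum_apply (s := s) (l := l) h0 hmono
        (fun k j => ∑ a ∈ Finset.Icc 1 l, u ⟨(a, k), (j, 0)⟩ a)
        (fun k j => ∑ a ∈ Finset.Icc 1 l, u ⟨(a, k), (j, 1)⟩ a) i
      rw [hrt, hsum, hD, Dvec_apply l d i] at h2
      rw [Finset.mem_Icc] at hi
      rw [if_pos hi, if_pos hi] at h2
      exact h2.symm
  -- Step 4: left inverse computation.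
  have hleft1 : ∀ (α β : ℕ → ℕ → ℕ),
      (∀ k j : ℕ, (k < 1 ∨ l < k ∨ j < 1 ∨ s k < j) → α k j = 0 ∧ β k j = 0) →
      ∀ (t k j : ℕ), t = 0 ∨ t = 1 →
      (∑ a ∈ Finset.Icc 1 l, phiF s l α β ⟨(a, k), (j, t)⟩ a) =
        (if t = 0 then α k j else β k j) := by
    intro α β hsupp t k j ht
    by_cases hv : 1 ≤ k ∧ k ≤ l ∧ 1 ≤ j ∧ j ≤ s k
    · obtain ⟨a₀, ⟨ha1, hak, hlt, hle⟩, huniq⟩ :=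
        level_exists_unique h0 hmono hv.1 hv.2.1 hv.2.2.1 hv.2.2.2
      have hx₀ : (⟨(a₀, k), (j, t)⟩ : Idx1) ∈ slotF s l := by
        rw [mem_slotF]
        dsimp only
        exact ⟨⟨ha1, le_trans hak hv.2.1, hv.1, hv.2.1, hak⟩, ⟨hlt, hle⟩, ht⟩
      have hother : ∀ a ∈ Finset.Icc 1 l, a ≠ a₀ →
          phiF s l α β ⟨(a, k), (j, t)⟩ a = 0 := by
        intro a ha hne
        by_cases hx : (⟨(a, k), (j, t)⟩ : Idx1) ∈ slotF s l
        · exfalso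
          have hxm := (mem_slotF s l _).mp hx
          dsimp only at hxm
          exact hne (huniq a ⟨hxm.1.1, hxm.1.2.2.2.2, hxm.2.1.1, hxm.2.1.2⟩)
        · rw [phiF_apply, if_neg hx]
          rfl
      rw [Finset.sum_eq_single_of_mem a₀
        (Finset.mem_Icc.mpr ⟨ha1, le_trans hak hv.2.1⟩) hother]
      rw [phiF_apply, if_pos hx₀, Finsupp.smul_apply, eVec_apply,
        if_pos (Finset.mem_Icc.mpr ⟨le_rfl, hak⟩), smul_eq_mul, mul_one]
      rfl
    · have hz := hsupp k j (by omega)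
      have hsum0 : (∑ a ∈ Finset.Icc 1 l, phiF s l α β ⟨(a, k), (j, t)⟩ a) = 0 := by
        refine Finset.sum_eq_zero fun a _ => ?_
        have hx : (⟨(a, k), (j, t)⟩ : Idx1) ∉ slotF s l :=
          not_mem_slotF hmono a k j t (by omega)
        rw [phiF_apply, if_neg hx]
        rfl
      rw [hsum0]
      rcases ht with ht | ht <;> subst ht <;> simp [hz.1, hz.2]
  -- Step 5: the bijection.
  rw [← Nat.card_eq_finsetCard]
  refine Nat.card_congr (Equiv.mk
    (fun q => ⟨phiF s l q.1.1 q.1.2, hmem_phi q.1.1 q.1.2 q.2.2⟩)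
    (fun w => ⟨(fun k j => ∑ a ∈ Finset.Icc 1 l, w.1 ⟨(a, k), (j, 0)⟩ a,
                fun k j => ∑ a ∈ Finset.Icc 1 l, w.1 ⟨(a, k), (j, 1)⟩ a),
               hback w.1 w.2⟩)
    ?_ ?_)
  · rintro ⟨⟨α, β⟩, hq⟩
    apply Subtype.ext
    dsimp only
    refine Prod.ext ?_ ?_
    · funext k j
      exact (hleft1 α β hq.1 0 k j (Or.inl rfl)).trans (by simp)
    · funext k j
      exact (hleft1 α β hq.1 1 k j (Or.inr rfl)).trans (by simp)
  · rintro ⟨u, hu⟩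
    apply Subtype.ext
    dsimp only
    exact round_trip h0 hmono u (hTfacts u hu).1 (hTfacts u hu).2.1
end

section
/- The sum of z^{inv(σ)} over all permutations σ in S(n; s_1,...,s_l) (those increasing on each block (s_{i-1}, s_i]) equals the Gaussian multinomial: ∏_{i=1}^{n}(1 - z^i) / ∏_{j=1}^{l+1} ∏_{i=1}^{s_j - s_{j-1}} (1 - z^i). -/
open Finset Polynomial

def inversions (n : ℕ) (σ : Equiv.Perm (Fin n)) : ℕ :=
  (Finset.univ.filter fun p : Fin n × Fin n => p.1 < p.2 ∧ σ p.2 < σ p.1).card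

namespace Flag

variable {n : ℕ}

lemma perm_apply_inv_self (β : Equiv.Perm (Fin n)) (a : Fin n) : β (β⁻¹ a) = a :=
  (Equiv.eq_symm_apply β).mp rfl

/-- `σ` is increasing on each fiber of `f`. -/
def Incr (f : Fin n → ℕ) (σ : Equiv.Perm (Fin n)) : Prop :=
  ∀ a b : Fin n, a < b → f a = f b → σ a < σ b

instance (f : Fin n → ℕ) (σ : Equiv.Perm (Fin n)) : Decidable (Incr f σ) := by
  unfold Incr; infer_instance

/-- Refinement of the partition given by `f`: singletons below `t`, fibers of `f` above. -/
def rr (f : Fin n → ℕ) (t : ℕ) (a : Fin n) : ℕ := if (a : ℕ) < t then (a : ℕ) else n + f a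

lemma rr_mono {f : Fin n → ℕ} (hf : Monotone f) (t : ℕ) : Monotone (rr f t) := by
  intro a b hab
  unfold rr
  have h1 : (a : ℕ) ≤ b := hab
  have h2 : f a ≤ f b := hf hab
  have h3 : (a : ℕ) < n := a.isLt
  split_ifs <;> omega

lemma rr_eq_iff {f : Fin n → ℕ} {t : ℕ} {a b : Fin n} :
    rr f t a = rr f t b ↔ (a = b ∨ (t ≤ (a : ℕ) ∧ t ≤ (b : ℕ) ∧ f a = f b)) := by
  unfold rr
  have h3 : (a : ℕ) < n := a.isLt
  have h4 : (b : ℕ) < n := b.isLt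
  constructor
  · intro h
    split_ifs at h with h1 h2 h2
    · left; exact Fin.ext h
    · omega
    · omega
    · right; omega
  · rintro (rfl | ⟨h1, h2, h3⟩)
    · rfl
    · rw [if_neg (by omega), if_neg (by omega)]; omega

/-- The insertion permutation: `t ↦ v`, `x ↦ x - 1` for `t < x ≤ v`, identity elsewhere. -/
def ins (t v : Fin n) (h : t ≤ v) : Equiv.Perm (Fin n) where
  toFun x := if (x : ℕ) = t then v else
    if hx : (t : ℕ) < x ∧ (x : ℕ) ≤ v then ⟨(x : ℕ) - 1, by have := x.isLt; omega⟩ else x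
  invFun x := if (x : ℕ) = v then t else
    if hx : (t : ℕ) ≤ x ∧ (x : ℕ) < v then ⟨(x : ℕ) + 1, by have := v.isLt; omega⟩ else x
  left_inv := by
    intro x
    have hv := v.isLt
    have hx := x.isLt
    have h' : (t : ℕ) ≤ v := h
    dsimp only
    split_ifs with h1 h2 h3 h4 h5 h6 h7 <;> (try ext) <;> simp_all <;> omega
  right_inv := by
    intro x
    have hv := v.isLt
    have hx := x.isLt
    have h' : (t : ℕ) ≤ v := h
    dsimp only
    split_ifs with h1 h2 h3 h4 h5 h6 h7 <;> (try ext) <;> simp_all <;> omega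

lemma ins_t {t v : Fin n} (h : t ≤ v) : ins t v h t = v := by
  simp [ins, Equiv.coe_fn_mk]

lemma ins_mid {t v x : Fin n} (h : t ≤ v) (h1 : (t : ℕ) < x) (h2 : (x : ℕ) ≤ v) :
    (ins t v h x : ℕ) = (x : ℕ) - 1 := by
  simp only [ins, Equiv.coe_fn_mk]
  rw [if_neg (by omega), dif_pos ⟨h1, h2⟩]

lemma ins_out {t v x : Fin n} (h : t ≤ v) (h1 : (x : ℕ) < t ∨ (v : ℕ) < x) :
    ins t v h x = x := by
  have h' : (t : ℕ) ≤ v := h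
  simp only [ins, Equiv.coe_fn_mk]
  rw [if_neg (by omega), dif_neg (by omega)]

lemma ins_inv_v {t v : Fin n} (h : t ≤ v) : (ins t v h)⁻¹ v = t := by
  simp [ins, Equiv.Perm.inv_def, Equiv.symm, Equiv.coe_fn_symm_mk]

lemma ins_inv_mid {t v x : Fin n} (h : t ≤ v) (h1 : (t : ℕ) ≤ x) (h2 : (x : ℕ) < v) :
    ((ins t v h)⁻¹ x : ℕ) = (x : ℕ) + 1 := by
  simp only [ins, Equiv.Perm.inv_def, Equiv.symm, Equiv.coe_fn_mk]
  rw [if_neg (by omega), dif_pos ⟨h1, h2⟩]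

lemma ins_inv_out {t v x : Fin n} (h : t ≤ v) (h1 : (x : ℕ) < t ∨ (v : ℕ) < x) :
    (ins t v h)⁻¹ x = x := by
  have h' : (t : ℕ) ≤ v := h
  simp only [ins, Equiv.Perm.inv_def, Equiv.symm, Equiv.coe_fn_mk]
  rw [if_neg (by omega), dif_neg (by omega)]

/-- number of inversions of `ins t v` is `v - t`. -/
lemma inversions_ins {t v : Fin n} (h : t ≤ v) : inversions n (ins t v h) = (v : ℕ) - t := by
  unfold inversions
  have hcard : (Finset.Ioc t v).card = (v : ℕ) - t := by
    exact Fin.card_Ioc t v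
  rw [← hcard]
  apply Finset.card_nbij' (i := fun p => p.2) (j := fun b => (t, b))
  · rintro ⟨a, b⟩ hab
    simp only [Finset.mem_coe, mem_filter, mem_univ, true_and] at hab
    obtain ⟨h1, h2⟩ := hab
    -- show b ∈ Ioc t v
    simp only [Finset.mem_coe, Finset.mem_Ioc]
    -- case analysis on positions
    have hv := v.isLt
    have hat := a.isLt
    by_contra hcon
    push_neg at hcon
    -- either b ≤ t or b > v
    have hb : (b : ℕ) ≤ t ∨ (v : ℕ) < b := by
      rcases lt_or_ge t b with hh | hh
      · right; exact hcon hh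
      · left; exact hh
    -- compute ins b and ins a
    have h1' : (a : ℕ) < b := h1
    rcases hb with hb | hb
    · -- b ≤ t, so a < b ≤ t, both below or b = t
      have ha' : (a : ℕ) < t := by omega
      have hia : ins t v h a = a := ins_out h (Or.inl ha')
      rcases eq_or_lt_of_le hb with hbe | hbl
      · have : b = t := Fin.ext hbe
        rw [this, ins_t h, hia] at h2
        have : (v : ℕ) < a := h2
        omega
      · have hib : ins t v h b = b := ins_out h (Or.inl hbl)
        rw [hia, hib] at h2
        have : (b : ℕ) < a := h2
        omega
    · -- v < b : ins b = b
      have hib : ins t v h b = b := ins_out h (Or.inr hb)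
      rw [hib] at h2
      -- ins a ∈ : cases on a
      rcases lt_trichotomy ((a : ℕ)) (t : ℕ) with ha | ha | ha
      · rw [ins_out h (Or.inl ha)] at h2
        have : (b : ℕ) < a := h2
        omega
      · have : a = t := Fin.ext ha
        rw [this, ins_t h] at h2
        have : (b : ℕ) < v := h2
        omega
      · rcases le_or_gt ((a : ℕ)) (v : ℕ) with ha2 | ha2
        · have := ins_mid h ha ha2
          have h2' : (b : ℕ) < (ins t v h a : ℕ) := h2
          omega
        · rw [ins_out h (Or.inr ha2)] at h2
          have : (b : ℕ) < a := h2
          omega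
  · rintro b hb
    simp only [Finset.mem_coe, Finset.mem_Ioc] at hb
    simp only [Finset.mem_coe, mem_filter, mem_univ, true_and]
    constructor
    · exact hb.1
    · have h1 : (t : ℕ) < b := hb.1
      have h2 : (b : ℕ) ≤ v := hb.2
      have := ins_mid h h1 h2
      rw [ins_t h]
      show (ins t v h b : ℕ) < v
      omega
  · rintro ⟨a, b⟩ hab
    simp only [Finset.mem_coe, mem_filter, mem_univ, true_and] at hab
    obtain ⟨h1, h2⟩ := hab
    -- need a = t
    simp only [Prod.mk.injEq]
    refine ⟨?_, trivial⟩
    -- a must be t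
    by_contra hat
    have hv := v.isLt
    have h1' : (a : ℕ) < b := h1
    -- b ∈ Ioc t v from first part… redo: show contradiction if a ≠ t
    -- we know from h2 that it's an inversion; show a = t
    -- cases on a
    rcases lt_trichotomy ((a : ℕ)) (t : ℕ) with ha | ha | ha
    ·
      have hia : ins t v h a = a := ins_out h (Or.inl ha)
      rw [hia] at h2
      have h2' : (ins t v h b : ℕ) < a := h2
      rcases lt_trichotomy ((b : ℕ)) (t : ℕ) with hb | hb | hb
      · rw [ins_out h (Or.inl hb)] at h2'; omega
      · rw [show b = t from Fin.ext hb, ins_t h] at h2'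
        have : (t : ℕ) ≤ v := h; omega
      · rcases le_or_gt ((b : ℕ)) (v : ℕ) with hb2 | hb2
        · have := ins_mid h hb hb2
          have h' : (t : ℕ) ≤ v := h
          omega
        · rw [ins_out h (Or.inr hb2)] at h2'; omega
    · exact hat (Fin.ext ha.symm)
    · -- a > t: ins a ∈ {a-1, a}; ins b ∈ {b-1, b} (b > a > t): ins b ≥ b - 1 ≥ a > ins a? 
      have h' : (t : ℕ) ≤ v := h
      have hbt : (t : ℕ) < b := by omega
      have hia : (ins t v h a : ℕ) = if (a:ℕ) ≤ v then (a:ℕ) - 1 else a := by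
        split_ifs with hc
        · exact ins_mid h ha hc
        · rw [ins_out h (Or.inr (by omega))]
      have hib : (ins t v h b : ℕ) = if (b:ℕ) ≤ v then (b:ℕ) - 1 else b := by
        split_ifs with hc
        · exact ins_mid h hbt hc
        · rw [ins_out h (Or.inr (by omega))]
      have h2' : (ins t v h b : ℕ) < (ins t v h a : ℕ) := h2
      rw [hia, hib] at h2'
      split_ifs at h2' <;> omega
  · rintro b hb
    rfl

/-- A downward closed subset of `Ioi a` is an interval. -/
lemma eq_Ioc_of_downward {S : Finset ℕ} {a : ℕ} (h1 : ∀ x ∈ S, a < x)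
    (h2 : ∀ x y, a < x → x ≤ y → y ∈ S → x ∈ S) : S = Finset.Ioc a (a + S.card) := by
  have hsub : S ⊆ Finset.Ioc a (a + S.card) := by
    intro x hx
    rw [Finset.mem_Ioc]
    refine ⟨h1 x hx, ?_⟩
    have : Finset.Ioc a x ⊆ S := by
      intro y hy
      rw [Finset.mem_Ioc] at hy
      exact h2 y x hy.1 hy.2 hx
    have := Finset.card_le_card this
    rw [Nat.card_Ioc] at this
    omega
  exact Finset.eq_of_subset_of_card_le hsub (by rw [Nat.card_Ioc]; omega)


/-- If `α` is increasing on fibers of monotone `f` and `β` preserves fibers of `f`,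
then inversions add. -/
lemma inversions_mul {f : Fin n → ℕ} (hf : Monotone f) {α β : Equiv.Perm (Fin n)}
    (hα : Incr f α) (hβ : ∀ a, f (β a) = f a) :
    inversions n (α * β) = inversions n α + inversions n β := by
  classical
  have hfs : ∀ a b : Fin n, f a < f b → a < b := by
    intro a b hab
    by_contra hc
    push_neg at hc
    exact absurd (hf hc) (by omega)
  have hβ' : ∀ a : Fin n, f (β⁻¹ a) = f a := by
    intro a
    conv_rhs => rw [← perm_apply_inv_self β a]
    rw [hβ]
  unfold inversions
  rw [add_comm, ← Finset.card_filter_add_card_filter_not (s := Finset.univ.filter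
      fun p : Fin n × Fin n => p.1 < p.2 ∧ (α * β) p.2 < (α * β) p.1)
      (p := fun p => f p.1 = f p.2), Finset.filter_filter, Finset.filter_filter]
  congr 1
  · -- within-fiber part equals inversions of β
    apply Finset.card_nbij' (i := id) (j := id)
    · intro p hab
      obtain ⟨a, b⟩ := p
      simp only [Finset.mem_coe, Finset.mem_filter, Finset.mem_univ, true_and] at hab ⊢
      simp only [Equiv.Perm.mul_apply, id] at hab ⊢
      obtain ⟨⟨h1, h2⟩, h3⟩ := hab
      refine ⟨h1, ?_⟩
      have hfb : f (β a) = f (β b) := by rw [hβ, hβ, h3]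
      rcases lt_trichotomy (β b) (β a) with hh | hh | hh
      · exact hh
      · exact absurd (β.injective hh) (by rintro rfl; exact lt_irrefl _ h1)
      · exact absurd (hα _ _ hh (by rw [hβ, hβ, h3])) (asymm h2)
    · intro p hab
      obtain ⟨a, b⟩ := p
      simp only [Finset.mem_coe, Finset.mem_filter, Finset.mem_univ, true_and] at hab ⊢
      simp only [Equiv.Perm.mul_apply, id] at hab ⊢
      obtain ⟨h1, h2⟩ := hab
      have h3 : f a = f b := by
        by_contra hne
        have : f a < f b := lt_of_le_of_ne (hf (le_of_lt h1)) hne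
        have : f (β a) < f (β b) := by rwa [hβ, hβ]
        exact absurd (hfs _ _ this) (not_lt.mpr (le_of_lt h2))
      have hfb : f (β b) = f (β a) := by rw [hβ, hβ, h3]
      exact ⟨⟨h1, hα _ _ h2 hfb⟩, h3⟩
    · intro _ _; rfl
    · intro _ _; rfl
  · -- cross-fiber part equals inversions of α
    apply Finset.card_nbij' (i := fun p => (β p.1, β p.2)) (j := fun p => (β⁻¹ p.1, β⁻¹ p.2))
    · intro p hab
      obtain ⟨a, b⟩ := p
      simp only [Finset.mem_coe, Finset.mem_filter, Finset.mem_univ, true_and] at hab ⊢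
      simp only [Equiv.Perm.mul_apply] at hab ⊢
      obtain ⟨⟨h1, h2⟩, h3⟩ := hab
      have hlt : f a < f b := lt_of_le_of_ne (hf (le_of_lt h1)) h3
      have : f (β a) < f (β b) := by rwa [hβ, hβ]
      exact ⟨hfs _ _ this, h2⟩
    · intro p hab
      obtain ⟨a, b⟩ := p
      simp only [Finset.mem_coe, Finset.mem_filter, Finset.mem_univ, true_and] at hab ⊢
      simp only [Equiv.Perm.mul_apply,
        perm_apply_inv_self] at hab ⊢
      obtain ⟨h1, h2⟩ := hab
      have h3 : f a ≠ f b := by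
        intro hh
        exact absurd (hα _ _ h1 hh) (asymm h2)
      have hlt : f a < f b := lt_of_le_of_ne (hf (le_of_lt h1)) h3
      have : f (β⁻¹ a) < f (β⁻¹ b) := by rwa [hβ', hβ']
      refine ⟨⟨hfs _ _ this, h2⟩, ?_⟩
      rw [hβ', hβ']; exact h3
    · rintro ⟨a, b⟩ _; simp
    · rintro ⟨a, b⟩ _; simp



open scoped Classical in
/-- End of the `f`-block containing `t`. -/
noncomputable def bend (f : Fin n → ℕ) (t : ℕ) (ht : t < n) : ℕ :=
  Nat.find (p := fun u => t < u ∧ ∀ h : u < n, f ⟨u, h⟩ ≠ f ⟨t, ht⟩)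
    ⟨n, ht, fun hh => absurd hh (lt_irrefl n)⟩

lemma bend_lt {f : Fin n → ℕ} {t : ℕ} (ht : t < n) : t < bend f t ht := by
  classical
  exact (Nat.find_spec (p := fun u => t < u ∧ ∀ h : u < n, f ⟨u, h⟩ ≠ f ⟨t, ht⟩)
    ⟨n, ht, fun hh => absurd hh (lt_irrefl n)⟩).1

lemma bend_le {f : Fin n → ℕ} {t : ℕ} (ht : t < n) : bend f t ht ≤ n := by
  classical
  exact Nat.find_le ⟨ht, fun hh => absurd hh (lt_irrefl n)⟩

lemma mem_fiber_iff {f : Fin n → ℕ} (hf : Monotone f) {t : ℕ} (ht : t < n) (x : Fin n) :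
    (t ≤ (x : ℕ) ∧ f x = f ⟨t, ht⟩) ↔ (t ≤ (x : ℕ) ∧ (x : ℕ) < bend f t ht) := by
  classical
  constructor
  · rintro ⟨h1, h2⟩
    refine ⟨h1, ?_⟩
    by_contra hc
    push_neg at hc
    have hbn : bend f t ht < n := lt_of_le_of_lt hc x.isLt
    have hne : f ⟨bend f t ht, hbn⟩ ≠ f ⟨t, ht⟩ :=
      (Nat.find_spec (p := fun u => t < u ∧ ∀ h : u < n, f ⟨u, h⟩ ≠ f ⟨t, ht⟩)
        ⟨n, ht, fun hh => absurd hh (lt_irrefl n)⟩).2 hbn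
    have hle1 : f ⟨t, ht⟩ ≤ f ⟨bend f t ht, hbn⟩ := hf (by
      show (t : ℕ) ≤ bend f t ht
      exact le_of_lt (bend_lt ht))
    have hle2 : f ⟨bend f t ht, hbn⟩ ≤ f x := hf (by show (bend f t ht : ℕ) ≤ (x : ℕ); exact hc)
    omega
  · rintro ⟨h1, h2⟩
    refine ⟨h1, ?_⟩
    rcases eq_or_lt_of_le h1 with he | he
    · congr 1
      exact Fin.ext he.symm
    · have hnot := Nat.find_min (p := fun u => t < u ∧ ∀ h : u < n, f ⟨u, h⟩ ≠ f ⟨t, ht⟩)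
        ⟨n, ht, fun hh => absurd hh (lt_irrefl n)⟩ h2
      by_contra hne
      exact hnot ⟨he, fun h => by rw [Fin.eta]; exact hne⟩


open scoped Classical in
/-- The set of positions in the open block `(t, e)` whose `σ`-value is below `σ t`. -/
noncomputable def SN (σ : Equiv.Perm (Fin n)) (tF : Fin n) (e : ℕ) : Finset ℕ :=
  (Finset.Ioo (tF : ℕ) e).filter (fun x => ∀ h : x < n, σ ⟨x, h⟩ < σ tF)

lemma mem_SN {σ : Equiv.Perm (Fin n)} {tF : Fin n} {e x : ℕ} :
    x ∈ SN σ tF e ↔ (((tF : ℕ) < x ∧ x < e) ∧ ∀ h : x < n, σ ⟨x, h⟩ < σ tF) := by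
  classical
  unfold SN
  simp [Finset.mem_filter, Finset.mem_Ioo]

lemma SN_card_lt {σ : Equiv.Perm (Fin n)} {tF : Fin n} {e : ℕ} (h : (tF : ℕ) < e) :
    (SN σ tF e).card < e - (tF : ℕ) := by
  classical
  have h1 : (SN σ tF e).card ≤ (Finset.Ioo (tF : ℕ) e).card := Finset.card_le_card
    (Finset.filter_subset _ _)
  rw [Nat.card_Ioo] at h1
  omega

/-- insertion permutation of the block of `t`, parameterized by `i`. -/
noncomputable def insP (f : Fin n → ℕ) (t : ℕ) (ht : t < n) (i : ℕ) : Equiv.Perm (Fin n) :=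
  if h : t + i < bend f t ht then
    ins ⟨t, ht⟩ ⟨t + i, lt_of_lt_of_le h (bend_le ht)⟩ (by
      rw [Fin.mk_le_mk]; omega)
  else 1

lemma insP_pres {f : Fin n → ℕ} (hf : Monotone f) {t : ℕ} (ht : t < n) {i : ℕ}
    (hi : t + i < bend f t ht) (a : Fin n) : rr f t (insP f t ht i a) = rr f t a := by
  have hle : (⟨t, ht⟩ : Fin n) ≤ ⟨t + i, lt_of_lt_of_le hi (bend_le ht)⟩ := by
    rw [Fin.mk_le_mk]; omega
  have hE : insP f t ht i = ins ⟨t, ht⟩ ⟨t + i, lt_of_lt_of_le hi (bend_le ht)⟩ hle := by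
    rw [insP, dif_pos hi]
  rw [hE]
  have hfv : f ⟨t + i, lt_of_lt_of_le hi (bend_le ht)⟩ = f ⟨t, ht⟩ :=
    ((mem_fiber_iff hf ht _).mpr ⟨by simp, by simp; omega⟩).2
  rcases lt_trichotomy ((a : ℕ)) t with h | h | h
  · rw [ins_out _ (Or.inl h)]
  · have ha : a = ⟨t, ht⟩ := Fin.ext h
    rw [ha, ins_t]
    exact rr_eq_iff.mpr (Or.inr ⟨by simp, by simp, hfv⟩)
  · rcases le_or_gt ((a : ℕ)) (t + i) with h2 | h2
    · have hmid : ((ins ⟨t, ht⟩ ⟨t + i, lt_of_lt_of_le hi (bend_le ht)⟩ hle) a : ℕ)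
          = (a : ℕ) - 1 := ins_mid hle h h2
      apply rr_eq_iff.mpr
      have hfa : f a = f ⟨t, ht⟩ :=
        ((mem_fiber_iff hf ht a).mpr ⟨by omega, by omega⟩).2
      have hfia : f ((ins ⟨t, ht⟩ ⟨t + i, lt_of_lt_of_le hi (bend_le ht)⟩ hle) a) = f ⟨t, ht⟩ :=
        ((mem_fiber_iff hf ht _).mpr ⟨by omega, by omega⟩).2
      exact Or.inr ⟨by omega, by omega, by rw [hfia, hfa]⟩
    · rw [ins_out _ (Or.inr (by simp; omega))]

lemma incr_succ_pair {f : Fin n → ℕ} (hf : Monotone f) {t : ℕ} (ht : t < n)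
    {σ : Equiv.Perm (Fin n)} (hσ : Incr (rr f (t + 1)) σ) {x y : Fin n}
    (h1 : t < (x : ℕ)) (h2 : (x : ℕ) < (y : ℕ)) (h3 : (y : ℕ) < bend f t ht) :
    σ x < σ y := by
  apply hσ x y (by rw [Fin.lt_def]; exact h2)
  apply rr_eq_iff.mpr
  refine Or.inr ⟨by omega, by omega, ?_⟩
  have hfx : f x = f ⟨t, ht⟩ := ((mem_fiber_iff hf ht x).mpr ⟨by omega, by omega⟩).2
  have hfy : f y = f ⟨t, ht⟩ := ((mem_fiber_iff hf ht y).mpr ⟨by omega, by omega⟩).2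
  rw [hfx, hfy]

lemma incr_t_iff {f : Fin n → ℕ} (hf : Monotone f) {t : ℕ} (ht : t < n)
    {α : Equiv.Perm (Fin n)} (hα : Incr (rr f t) α) {x y : Fin n}
    (hx1 : t ≤ (x : ℕ)) (hx2 : (x : ℕ) < bend f t ht)
    (hy1 : t ≤ (y : ℕ)) (hy2 : (y : ℕ) < bend f t ht) :
    ((x : ℕ) < (y : ℕ) ↔ α x < α y) := by
  have hfx : f x = f ⟨t, ht⟩ := ((mem_fiber_iff hf ht x).mpr ⟨hx1, hx2⟩).2
  have hfy : f y = f ⟨t, ht⟩ := ((mem_fiber_iff hf ht y).mpr ⟨hy1, hy2⟩).2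
  have hdir : ∀ p q : Fin n, (p : ℕ) < (q : ℕ) → f p = f ⟨t, ht⟩ → f q = f ⟨t, ht⟩ →
      t ≤ (p : ℕ) → t ≤ (q : ℕ) → α p < α q := by
    intro p q hpq hfp hfq hp hq
    exact hα p q (by rw [Fin.lt_def]; exact hpq)
      (rr_eq_iff.mpr (Or.inr ⟨hp, hq, by rw [hfp, hfq]⟩))
  constructor
  · intro h; exact hdir x y h hfx hfy hx1 hy1
  · intro h
    rcases lt_trichotomy ((x : ℕ)) ((y : ℕ)) with hh | hh | hh
    · exact hh
    · exact absurd (congrArg α (Fin.ext hh)) (ne_of_lt h)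
    · exact absurd (hdir y x hh hfy hfx hy1 hx1) (asymm h)


lemma SN_eq {f : Fin n → ℕ} (hf : Monotone f) {t : ℕ} (ht : t < n)
    {σ : Equiv.Perm (Fin n)} (hσ : Incr (rr f (t + 1)) σ) :
    SN σ ⟨t, ht⟩ (bend f t ht) = Finset.Ioc t (t + (SN σ ⟨t, ht⟩ (bend f t ht)).card) := by
  have h0 : ((⟨t, ht⟩ : Fin n) : ℕ) = t := rfl
  apply eq_Ioc_of_downward (a := t)
  · intro x hx
    have := (mem_SN.mp hx).1.1
    omega
  · intro x y hx hxy hy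
    rw [mem_SN] at hy ⊢
    obtain ⟨⟨hy1, hy2⟩, hy3⟩ := hy
    rw [h0] at hy1 ⊢
    have hxe : x < bend f t ht := by omega
    refine ⟨⟨hx, hxe⟩, ?_⟩
    intro hxn
    have hyn : y < n := lt_of_lt_of_le hy2 (bend_le ht)
    rcases eq_or_lt_of_le hxy with rfl | hlt
    · exact hy3 hxn
    · exact lt_trans (incr_succ_pair hf ht hσ (x := ⟨x, hxn⟩) (y := ⟨y, hyn⟩) hx hlt hy2)
        (hy3 hyn)

lemma alpha_incr {f : Fin n → ℕ} (hf : Monotone f) {t : ℕ} (ht : t < n)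
    {σ : Equiv.Perm (Fin n)} (hσ : Incr (rr f (t + 1)) σ) :
    Incr (rr f t) (σ * (insP f t ht (SN σ ⟨t, ht⟩ (bend f t ht)).card)⁻¹) := by
  set e := bend f t ht with hEdef
  set c := (SN σ ⟨t, ht⟩ e).card with hcdef
  have hte : t < e := bend_lt ht
  have hcm : c < e - t := SN_card_lt hte
  have hv : t + c < e := by omega
  have hvn : t + c < n := lt_of_lt_of_le hv (bend_le ht)
  have hle : (⟨t, ht⟩ : Fin n) ≤ ⟨t + c, hvn⟩ := by rw [Fin.mk_le_mk]; omega
  have hiE : insP f t ht c = ins ⟨t, ht⟩ ⟨t + c, hvn⟩ hle := by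
    rw [insP, dif_pos hv]
  have hSN := SN_eq hf ht hσ
  have hmem : ∀ x : Fin n, t < (x : ℕ) → (x : ℕ) < e → ((x : ℕ) ≤ t + c ↔ σ x < σ ⟨t, ht⟩) := by
    intro x h1 h2
    constructor
    · intro h3
      have hx : (x : ℕ) ∈ SN σ ⟨t, ht⟩ e := by
        rw [hSN, ← hcdef, Finset.mem_Ioc]
        exact ⟨h1, h3⟩
      have h4 := (mem_SN.mp hx).2 x.isLt
      rwa [Fin.eta] at h4
    · intro h3
      have hx : (x : ℕ) ∈ SN σ ⟨t, ht⟩ e := mem_SN.mpr ⟨⟨h1, h2⟩,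
        fun h => by rw [Fin.eta]; exact h3⟩
      rw [hSN, ← hcdef, Finset.mem_Ioc] at hx
      exact hx.2
  have htFlt : ∀ b : Fin n, t < (b : ℕ) → (b : ℕ) < e → t + c < (b : ℕ) → σ ⟨t, ht⟩ < σ b := by
    intro b h1 h2 h3
    have hiff := hmem b h1 h2
    rcases lt_trichotomy (σ ⟨t, ht⟩) (σ b) with hh | hh | hh
    · exact hh
    · exact absurd (congrArg Fin.val (σ.injective hh)) (by simp; omega)
    · exact absurd (hiff.mpr hh) (by omega)
  have horder : ∀ x y : Fin n, t < (x : ℕ) → (x : ℕ) < (y : ℕ) → (y : ℕ) < e → σ x < σ y :=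
    fun x y h1 h2 h3 => incr_succ_pair hf ht hσ h1 h2 h3
  intro a b hab heq
  have hab' : (a : ℕ) < b := hab
  rcases rr_eq_iff.mp heq with hE2 | ⟨ha, hb, hfab⟩
  · exact absurd hE2 (ne_of_lt hab)
  simp only [Equiv.Perm.mul_apply, hiE]
  rcases lt_or_ge ((a : ℕ)) e with hae | hae
  · -- a and b in the fiber of t
    have hfa : f a = f ⟨t, ht⟩ := ((mem_fiber_iff hf ht a).mpr ⟨ha, hae⟩).2
    have hfb : f b = f ⟨t, ht⟩ := by rw [← hfab]; exact hfa
    have hbe : (b : ℕ) < e := ((mem_fiber_iff hf ht b).mp ⟨hb, hfb⟩).2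
    rcases lt_trichotomy ((a : ℕ)) (t + c) with hA | hA | hA
    · have hainv : (((ins ⟨t, ht⟩ ⟨t + c, hvn⟩ hle)⁻¹) a : ℕ) = (a : ℕ) + 1 :=
        ins_inv_mid hle ha hA
      rcases lt_trichotomy ((b : ℕ)) (t + c) with hB | hB | hB
      · have hbinv : (((ins ⟨t, ht⟩ ⟨t + c, hvn⟩ hle)⁻¹) b : ℕ) = (b : ℕ) + 1 :=
          ins_inv_mid hle hb hB
        exact horder _ _ (by omega) (by omega) (by omega)
      · have hbv : b = ⟨t + c, hvn⟩ := Fin.ext hB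
        rw [hbv, ins_inv_v]
        exact (hmem _ (by omega) (by omega)).mp (by omega)
      · have hbinv : ((ins ⟨t, ht⟩ ⟨t + c, hvn⟩ hle)⁻¹) b = b :=
          ins_inv_out hle (Or.inr (by simp; omega))
        rw [hbinv]
        exact lt_trans ((hmem _ (by omega) (by omega)).mp (by omega))
          (htFlt b (by omega) hbe hB)
    · have hav : a = ⟨t + c, hvn⟩ := Fin.ext hA
      rw [hav, ins_inv_v]
      have hbinv : ((ins ⟨t, ht⟩ ⟨t + c, hvn⟩ hle)⁻¹) b = b :=
        ins_inv_out hle (Or.inr (by simp; omega))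
      rw [hbinv]
      exact htFlt b (by omega) hbe (by omega)
    · have hainv : ((ins ⟨t, ht⟩ ⟨t + c, hvn⟩ hle)⁻¹) a = a :=
        ins_inv_out hle (Or.inr (by simp; omega))
      have hbinv : ((ins ⟨t, ht⟩ ⟨t + c, hvn⟩ hle)⁻¹) b = b :=
        ins_inv_out hle (Or.inr (by simp; omega))
      rw [hainv, hbinv]
      exact horder a b (by omega) hab' hbe
  · -- a and b above the fiber
    have hbe : e ≤ (b : ℕ) := le_trans hae (le_of_lt hab')
    have hainv : ((ins ⟨t, ht⟩ ⟨t + c, hvn⟩ hle)⁻¹) a = a :=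
      ins_inv_out hle (Or.inr (by simp; omega))
    have hbinv : ((ins ⟨t, ht⟩ ⟨t + c, hvn⟩ hle)⁻¹) b = b :=
      ins_inv_out hle (Or.inr (by simp; omega))
    rw [hainv, hbinv]
    exact hσ a b hab (rr_eq_iff.mpr (Or.inr ⟨by omega, by omega, hfab⟩))


lemma beta_incr {f : Fin n → ℕ} (hf : Monotone f) {t : ℕ} (ht : t < n)
    {α : Equiv.Perm (Fin n)} (hα : Incr (rr f t) α) {i : ℕ} (hi : i < bend f t ht - t) :
    Incr (rr f (t + 1)) (α * insP f t ht i) := by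
  set e := bend f t ht with hEdef
  have hv : t + i < e := by omega
  have hvn : t + i < n := lt_of_lt_of_le hv (bend_le ht)
  have hle : (⟨t, ht⟩ : Fin n) ≤ ⟨t + i, hvn⟩ := by rw [Fin.mk_le_mk]; omega
  have hiE : insP f t ht i = ins ⟨t, ht⟩ ⟨t + i, hvn⟩ hle := by rw [insP, dif_pos hv]
  intro a b hab heq
  have hab' : (a : ℕ) < b := hab
  rcases rr_eq_iff.mp heq with hE2 | ⟨ha, hb, hfab⟩
  · exact absurd hE2 (ne_of_lt hab)
  simp only [Equiv.Perm.mul_apply, hiE]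
  rcases lt_or_ge ((a : ℕ)) e with hae | hae
  · have hfa : f a = f ⟨t, ht⟩ := ((mem_fiber_iff hf ht a).mpr ⟨by omega, hae⟩).2
    have hfb : f b = f ⟨t, ht⟩ := by rw [← hfab]; exact hfa
    have hbe : (b : ℕ) < e := ((mem_fiber_iff hf ht b).mp ⟨by omega, hfb⟩).2
    have hdesc : ∀ x : Fin n, t < (x : ℕ) → (x : ℕ) < e →
        ((ins ⟨t, ht⟩ ⟨t + i, hvn⟩ hle) x : ℕ) = if (x : ℕ) ≤ t + i then (x : ℕ) - 1
          else (x : ℕ) := by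
      intro x h1 h2
      split_ifs with h3
      · exact ins_mid hle h1 (by simp; omega)
      · rw [ins_out hle (Or.inr (by simp; omega))]
    have hda := hdesc a (by omega) hae
    have hdb := hdesc b (by omega) hbe
    have hbnds : t ≤ ((ins ⟨t, ht⟩ ⟨t + i, hvn⟩ hle) a : ℕ) ∧
        ((ins ⟨t, ht⟩ ⟨t + i, hvn⟩ hle) a : ℕ) < e ∧
        t ≤ ((ins ⟨t, ht⟩ ⟨t + i, hvn⟩ hle) b : ℕ) ∧
        ((ins ⟨t, ht⟩ ⟨t + i, hvn⟩ hle) b : ℕ) < e ∧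
        ((ins ⟨t, ht⟩ ⟨t + i, hvn⟩ hle) a : ℕ) < ((ins ⟨t, ht⟩ ⟨t + i, hvn⟩ hle) b : ℕ) := by
      split_ifs at hda hdb <;> omega
    exact (incr_t_iff hf ht hα hbnds.1 hbnds.2.1 hbnds.2.2.1 hbnds.2.2.2.1).mp hbnds.2.2.2.2
  · have hbe : e ≤ (b : ℕ) := le_trans hae (le_of_lt hab')
    have hA : (ins ⟨t, ht⟩ ⟨t + i, hvn⟩ hle) a = a := ins_out hle (Or.inr (by simp; omega))
    have hB : (ins ⟨t, ht⟩ ⟨t + i, hvn⟩ hle) b = b := ins_out hle (Or.inr (by simp; omega))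
    rw [hA, hB]
    exact hα a b hab (rr_eq_iff.mpr (Or.inr ⟨by omega, by omega, hfab⟩))

lemma SN_beta {f : Fin n → ℕ} (hf : Monotone f) {t : ℕ} (ht : t < n)
    {α : Equiv.Perm (Fin n)} (hα : Incr (rr f t) α) {i : ℕ} (hi : i < bend f t ht - t) :
    SN (α * insP f t ht i) ⟨t, ht⟩ (bend f t ht) = Finset.Ioc t (t + i) := by
  set e := bend f t ht with hEdef
  have hv : t + i < e := by omega
  have hvn : t + i < n := lt_of_lt_of_le hv (bend_le ht)
  have hle : (⟨t, ht⟩ : Fin n) ≤ ⟨t + i, hvn⟩ := by rw [Fin.mk_le_mk]; omega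
  have hiE : insP f t ht i = ins ⟨t, ht⟩ ⟨t + i, hvn⟩ hle := by rw [insP, dif_pos hv]
  ext x
  rw [mem_SN, Finset.mem_Ioc]
  simp only [Equiv.Perm.mul_apply, hiE, ins_t]
  constructor
  · rintro ⟨⟨h1, h2⟩, h3⟩
    have h1' : t < x := h1
    refine ⟨h1', ?_⟩
    by_contra hc
    push_neg at hc
    have hxn : x < n := lt_of_lt_of_le h2 (bend_le ht)
    have h4 := h3 hxn
    have hIO : (ins ⟨t, ht⟩ ⟨t + i, hvn⟩ hle) ⟨x, hxn⟩ = ⟨x, hxn⟩ :=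
      ins_out hle (Or.inr (by simp; omega))
    rw [hIO] at h4
    have hgt := (incr_t_iff hf ht hα (x := ⟨t + i, hvn⟩) (y := ⟨x, hxn⟩)
      (by simp) (by simp; omega) (by simp; omega) (by simp; omega)).mp (by simp; omega)
    exact absurd h4 (asymm hgt)
  · rintro ⟨h1, h2⟩
    have hx2 : x < e := by omega
    have hxn : x < n := lt_of_lt_of_le hx2 (bend_le ht)
    refine ⟨⟨h1, hx2⟩, ?_⟩
    intro h
    have hmid : ((ins ⟨t, ht⟩ ⟨t + i, hvn⟩ hle) ⟨x, h⟩ : ℕ) = x - 1 :=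
      ins_mid hle (by exact h1) (by simp; omega)
    exact (incr_t_iff hf ht hα (by simp only [hmid, Fin.val_mk]; omega)
      (by simp only [hmid, Fin.val_mk]; omega) (by simp) (by simp; omega)).mp
      (by simp only [hmid, Fin.val_mk]; omega)


lemma inversions_insP {f : Fin n → ℕ} {t : ℕ} (ht : t < n) {i : ℕ}
    (hi : t + i < bend f t ht) : inversions n (insP f t ht i) = i := by
  have hvn : t + i < n := lt_of_lt_of_le hi (bend_le ht)
  have hle : (⟨t, ht⟩ : Fin n) ≤ ⟨t + i, hvn⟩ := by rw [Fin.mk_le_mk]; omega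
  have hiE : insP f t ht i = ins ⟨t, ht⟩ ⟨t + i, hvn⟩ hle := by rw [insP, dif_pos hi]
  rw [hiE, inversions_ins]
  simp

lemma step (f : Fin n → ℕ) (hf : Monotone f) (t : ℕ) (ht : t < n) :
    (∑ σ ∈ Finset.univ.filter (fun σ => Incr (rr f (t + 1)) σ),
        (X : Polynomial ℚ) ^ inversions n σ)
      = (∑ σ ∈ Finset.univ.filter (fun σ => Incr (rr f t) σ),
          (X : Polynomial ℚ) ^ inversions n σ)
        * ∑ i ∈ Finset.range (bend f t ht - t), (X : Polynomial ℚ) ^ i := by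
  classical
  rw [Finset.sum_mul_sum, ← Finset.sum_product']
  apply Finset.sum_nbij'
    (i := fun σ => (σ * (insP f t ht (SN σ ⟨t, ht⟩ (bend f t ht)).card)⁻¹,
      (SN σ ⟨t, ht⟩ (bend f t ht)).card))
    (j := fun p => p.1 * insP f t ht p.2)
  · intro σ hσm
    rw [Finset.mem_filter] at hσm
    have hσ := hσm.2
    rw [Finset.mem_product]
    refine ⟨Finset.mem_filter.mpr ⟨Finset.mem_univ _, alpha_incr hf ht hσ⟩, ?_⟩
    rw [Finset.mem_range]
    exact SN_card_lt (bend_lt ht)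
  · rintro ⟨α, i⟩ hp
    rw [Finset.mem_product, Finset.mem_filter, Finset.mem_range] at hp
    rw [Finset.mem_filter]
    exact ⟨Finset.mem_univ _, beta_incr hf ht hp.1.2 hp.2⟩
  · intro σ hσm
    exact inv_mul_cancel_right σ _
  · rintro ⟨α, i⟩ hp
    rw [Finset.mem_product, Finset.mem_filter, Finset.mem_range] at hp
    obtain ⟨⟨-, hα⟩, hi⟩ := hp
    have hSN := SN_beta hf ht hα hi
    have hc : (SN (α * insP f t ht i) ⟨t, ht⟩ (bend f t ht)).card = i := by
      rw [hSN, Nat.card_Ioc]; omega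
    simp only [hc]
    exact Prod.ext (mul_inv_cancel_right _ _) rfl
  · intro σ hσm
    rw [Finset.mem_filter] at hσm
    have hσ := hσm.2
    have hcm : (SN σ ⟨t, ht⟩ (bend f t ht)).card < bend f t ht - t := SN_card_lt (bend_lt ht)
    have hvlt : t + (SN σ ⟨t, ht⟩ (bend f t ht)).card < bend f t ht := by
      have := bend_lt (f := f) ht
      omega
    conv_lhs => rw [(inv_mul_cancel_right σ (insP f t ht (SN σ ⟨t, ht⟩ (bend f t ht)).card)).symm]
    rw [inversions_mul (rr_mono hf t) (alpha_incr hf ht hσ)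
      (fun a => insP_pres hf ht hvlt a), pow_add, inversions_insP ht hvlt]


noncomputable def mlen (f : Fin n → ℕ) (j : ℕ) : ℕ := if h : j < n then bend f j h - j else 1

lemma chain (f : Fin n → ℕ) (hf : Monotone f) (t : ℕ) (ht : t ≤ n) :
    (∑ σ ∈ Finset.univ.filter (fun σ => Incr (rr f t) σ), (X : Polynomial ℚ) ^ inversions n σ)
    = (∑ σ ∈ Finset.univ.filter (fun σ => Incr (rr f 0) σ), (X : Polynomial ℚ) ^ inversions n σ)
      * ∏ j ∈ Finset.range t, ∑ i ∈ Finset.range (mlen f j), (X : Polynomial ℚ) ^ i := by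
  induction t with
  | zero => simp
  | succ t ih =>
    have ht' : t < n := ht
    rw [step f hf t ht', ih (le_of_lt ht'), Finset.prod_range_succ]
    have hm : mlen f t = bend f t ht' - t := by rw [mlen, dif_pos ht']
    rw [hm, mul_assoc]

lemma filter_rr_n (f : Fin n → ℕ) :
    Finset.univ.filter (fun σ : Equiv.Perm (Fin n) => Incr (rr f n) σ) = Finset.univ := by
  apply Finset.filter_true_of_mem
  intro σ _ a b hab heq
  exfalso
  unfold rr at heq
  rw [if_pos a.isLt, if_pos b.isLt] at heq
  have : (a : ℕ) < b := hab
  omega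

lemma filter_rr0 (f : Fin n → ℕ) :
    (Finset.univ.filter fun σ : Equiv.Perm (Fin n) => Incr (rr f 0) σ)
      = Finset.univ.filter (fun σ => Incr f σ) := by
  apply Finset.filter_congr
  intro σ _
  constructor
  · intro h a b hab heq
    apply h a b hab
    unfold rr
    simp only [Nat.not_lt_zero, if_false]
    omega
  · intro h a b hab heq
    apply h a b hab
    unfold rr at heq
    simp only [Nat.not_lt_zero, if_false] at heq
    omega

lemma inversions_one : inversions n 1 = 0 := by
  unfold inversions
  rw [Finset.card_eq_zero, Finset.filter_eq_empty_iff]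
  rintro ⟨a, b⟩ -
  rintro ⟨h1, h2⟩
  simp only [Equiv.Perm.one_apply] at h2
  exact absurd (lt_trans h1 h2) (lt_irrefl _)

lemma filter_const :
    (Finset.univ.filter fun σ : Equiv.Perm (Fin n) => Incr (fun _ => 0) σ) = {1} := by
  ext σ
  simp only [Finset.mem_filter, Finset.mem_univ, true_and, Finset.mem_singleton]
  constructor
  · intro h
    have hsm : StrictMono σ := fun a b hab => h a b hab rfl
    have hsm' : StrictMono ⇑σ⁻¹ := by
      intro a b hab
      rcases lt_trichotomy (σ⁻¹ a) (σ⁻¹ b) with hh | hh | hh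
      · exact hh
      · exfalso
        have : a = b := by
          have := congrArg σ hh
          rwa [perm_apply_inv_self, perm_apply_inv_self] at this
        exact absurd this (ne_of_lt hab)
      · exfalso
        have := hsm hh
        rw [perm_apply_inv_self, perm_apply_inv_self] at this
        exact absurd (lt_trans hab this) (lt_irrefl _)
    have hkey : ∀ τ : Equiv.Perm (Fin n), StrictMono ⇑τ → ∀ m : ℕ, ∀ h : m < n,
        m ≤ (τ ⟨m, h⟩ : ℕ) := by
      intro τ hτ m
      induction m with
      | zero => intro h; exact Nat.zero_le _
      | succ m ih =>
        intro h
        have hm : m < n := by omega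
        have h1 := ih hm
        have h2 : τ ⟨m, hm⟩ < τ ⟨m + 1, h⟩ := hτ (by rw [Fin.mk_lt_mk]; omega)
        have h3 : (τ ⟨m, hm⟩ : ℕ) < (τ ⟨m + 1, h⟩ : ℕ) := h2
        omega
    apply Equiv.ext
    intro x
    have h1 : x ≤ σ x := by
      have := hkey σ hsm x.val x.isLt
      rw [Fin.eta] at this
      exact this
    have h2 : x ≤ σ⁻¹ x := by
      have := hkey σ⁻¹ hsm' x.val x.isLt
      rw [Fin.eta] at this
      exact this
    have h3 : σ x ≤ x := by
      have := hsm.monotone h2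
      rwa [perm_apply_inv_self] at this
    exact le_antisymm h3 h1
  · rintro rfl
    intro a b hab _
    simpa using hab

lemma bend_const (t : ℕ) (ht : t < n) : bend (fun _ : Fin n => 0) t ht = n := by
  apply le_antisymm (bend_le ht)
  by_contra hc
  push_neg at hc
  have := (mem_fiber_iff (f := fun _ : Fin n => 0) monotone_const ht
    ⟨bend (fun _ : Fin n => 0) t ht, hc⟩).mp ⟨le_of_lt (bend_lt (f := fun _ : Fin n => 0) ht), rfl⟩
  exact absurd this.2 (lt_irrefl _)

lemma main_chain (f : Fin n → ℕ) (hf : Monotone f) :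
    (∑ σ : Equiv.Perm (Fin n), (X : Polynomial ℚ) ^ inversions n σ)
    = (∑ σ ∈ Finset.univ.filter (fun σ => Incr f σ), (X : Polynomial ℚ) ^ inversions n σ)
      * ∏ j ∈ Finset.range n, ∑ i ∈ Finset.range (mlen f j), (X : Polynomial ℚ) ^ i := by
  have h := chain f hf n (le_refl n)
  rw [filter_rr_n, filter_rr0] at h
  exact h

lemma const_chain :
    (∑ σ : Equiv.Perm (Fin n), (X : Polynomial ℚ) ^ inversions n σ)
    = ∏ j ∈ Finset.range n, ∑ i ∈ Finset.range (n - j), (X : Polynomial ℚ) ^ i := by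
  have h := main_chain (n := n) (fun _ => 0) monotone_const
  rw [filter_const, Finset.sum_singleton, inversions_one, pow_zero, one_mul] at h
  rw [h]
  apply Finset.prod_congr rfl
  intro j hj
  rw [mlen, dif_pos (Finset.mem_range.mp hj), bend_const]


/-- block index function of the flag `s`. -/
noncomputable def fS (s : ℕ → ℕ) (hex : ∀ a : Fin n, ∃ b, (a : ℕ) < s (b + 1)) (a : Fin n) :
    ℕ := Nat.find (hex a)

section FS

variable {s : ℕ → ℕ} {l : ℕ} (h0 : s 0 = 0) (hn : s (l + 1) = n)
  (hmono : ∀ i ≤ l, s i < s (i + 1)) (hex : ∀ a : Fin n, ∃ b, (a : ℕ) < s (b + 1))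

include hmono in
lemma s_le : ∀ i j, i ≤ j → j ≤ l + 1 → s i ≤ s j := by
  intro i j hij hjl
  induction j with
  | zero =>
    have : i = 0 := by omega
    rw [this]
  | succ j ih =>
    rcases Nat.eq_or_lt_of_le hij with rfl | hlt
    · exact le_refl _
    · have h1 : s i ≤ s j := ih (by omega) (by omega)
      have h2 : s j < s (j + 1) := hmono j (by omega)
      omega

omit h0 hn hmono in
include hex in
lemma fS_spec (a : Fin n) : (a : ℕ) < s (fS s hex a + 1) :=
  Nat.find_spec (hex a)

omit h0 hmono in
include hn hex in
lemma fS_le (a : Fin n) : fS s hex a ≤ l :=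
  Nat.find_le (by rw [hn]; exact a.isLt)

omit hn hmono in
include h0 hex in
lemma fS_lb (a : Fin n) : s (fS s hex a) ≤ (a : ℕ) := by
  rcases Nat.eq_zero_or_pos (fS s hex a) with hz | hp
  · rw [hz, h0]; exact Nat.zero_le _
  · have hm : fS s hex a - 1 < Nat.find (hex a) := by
      have : Nat.find (hex a) = fS s hex a := rfl
      omega
    have := Nat.find_min (hex a) hm
    push_neg at this
    have h2 : fS s hex a - 1 + 1 = fS s hex a := by omega
    rwa [h2] at this

omit h0 hn in
include hmono hex in
lemma fS_eq {a : Fin n} {b : ℕ} (hb : b ≤ l) (h1 : s b ≤ (a : ℕ)) (h2 : (a : ℕ) < s (b + 1)) :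
    fS s hex a = b := by
  apply le_antisymm
  · exact Nat.find_le h2
  · by_contra hc
    push_neg at hc
    have hsp : (a : ℕ) < s (fS s hex a + 1) := Nat.find_spec (hex a)
    have : s (fS s hex a + 1) ≤ s b := s_le hmono _ _ (by omega) (by omega)
    omega

omit h0 hn hmono in
include hex in
lemma fS_mono : Monotone (fS s hex) := by
  intro a b hab
  exact Nat.find_mono (fun m hm => lt_of_le_of_lt (by exact hab) hm)

include h0 hn hmono hex in
lemma bend_fS (t : ℕ) (ht : t < n) :
    bend (fS s hex) t ht = s (fS s hex ⟨t, ht⟩ + 1) := by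
  set b := fS s hex ⟨t, ht⟩ with hb
  have hbl : b ≤ l := fS_le hn hex _
  have hlb : s b ≤ t := by
    have := fS_lb h0 hex (⟨t, ht⟩ : Fin n)
    rw [← hb] at this
    exact this
  have hub : t < s (b + 1) := by
    have := fS_spec hex (⟨t, ht⟩ : Fin n)
    rw [← hb] at this
    exact this
  have hbt : t < bend (fS s hex) t ht := bend_lt ht
  apply le_antisymm
  · by_contra hc
    push_neg at hc
    have hxn : s (b + 1) < n := lt_of_lt_of_le hc (bend_le ht)
    have hmem := (mem_fiber_iff (fS_mono hex) ht ⟨s (b + 1), hxn⟩).mpr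
      ⟨by simp; omega, by simp; omega⟩
    have h2 := hmem.2
    have h3 := fS_spec hex (⟨s (b + 1), hxn⟩ : Fin n)
    rw [h2, ← hb] at h3
    simp at h3
  · by_contra hc
    push_neg at hc
    have hxn : bend (fS s hex) t ht < n := by
      have : s (b + 1) ≤ n := by
        rw [← hn]
        exact s_le hmono _ _ (by omega) (le_refl _)
      omega
    have hfx : fS s hex ⟨bend (fS s hex) t ht, hxn⟩ = b :=
      fS_eq hmono hex hbl (by simp; omega) (by simp; omega)
    have hmem := (mem_fiber_iff (fS_mono hex) ht ⟨bend (fS s hex) t ht, hxn⟩).mp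
      ⟨by simp; exact le_of_lt (bend_lt ht), by rw [hfx]⟩
    have h2 := hmem.2
    simp at h2


include h0 hn hmono hex in
lemma block_prod :
    (∏ j ∈ Finset.Icc 1 (l + 1), ∏ i ∈ Finset.Icc 1 (s j - s (j - 1)),
      (1 - (X : Polynomial ℚ) ^ i))
    = ∏ j ∈ Finset.range n, (1 - (X : Polynomial ℚ) ^ (mlen (fS s hex) j)) := by
  have hA : (∏ j ∈ Finset.Icc 1 (l + 1), ∏ i ∈ Finset.Icc 1 (s j - s (j - 1)),
      (1 - (X : Polynomial ℚ) ^ i))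
      = ∏ b ∈ Finset.range (l + 1), ∏ i ∈ Finset.Icc 1 (s (b + 1) - s b),
        (1 - (X : Polynomial ℚ) ^ i) := by
    apply Finset.prod_nbij' (i := fun j => j - 1) (j := fun b => b + 1)
    · intro a ha; rw [Finset.mem_Icc] at ha; rw [Finset.mem_range]; omega
    · intro a ha; rw [Finset.mem_range] at ha; rw [Finset.mem_Icc]; omega
    · intro a ha; rw [Finset.mem_Icc] at ha; omega
    · intro a _; omega
    · intro a ha
      rw [Finset.mem_Icc] at ha
      have hh : a - 1 + 1 = a := by omega
      rw [hh]
  have hB : ∀ b ≤ l, (∏ i ∈ Finset.Icc 1 (s (b + 1) - s b), (1 - (X : Polynomial ℚ) ^ i))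
      = ∏ j ∈ Finset.Ico (s b) (s (b + 1)), (1 - (X : Polynomial ℚ) ^ (mlen (fS s hex) j)) := by
    intro b hbl
    have hsb : s b < s (b + 1) := hmono b hbl
    have hsn : s (b + 1) ≤ n := by rw [← hn]; exact s_le hmono _ _ (by omega) (le_refl _)
    apply Finset.prod_nbij' (i := fun i => s (b + 1) - i) (j := fun j => s (b + 1) - j)
    · intro a ha; rw [Finset.mem_Icc] at ha; rw [Finset.mem_Ico]; omega
    · intro a ha; rw [Finset.mem_Ico] at ha; rw [Finset.mem_Icc]; omega
    · intro a ha; rw [Finset.mem_Icc] at ha; omega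
    · intro a ha; rw [Finset.mem_Ico] at ha; omega
    · intro a ha
      rw [Finset.mem_Icc] at ha
      have hj : s (b + 1) - a < n := by omega
      have hfj : fS s hex ⟨s (b + 1) - a, hj⟩ = b :=
        fS_eq hmono hex hbl (by simp; omega) (by simp; omega)
      rw [mlen, dif_pos hj, bend_fS h0 hn hmono hex _ hj, hfj]
      congr 2
      omega
  have hC : ∀ k, k ≤ l + 1 → (∏ b ∈ Finset.range k, ∏ j ∈ Finset.Ico (s b) (s (b + 1)),
      (1 - (X : Polynomial ℚ) ^ (mlen (fS s hex) j)))
      = ∏ j ∈ Finset.range (s k), (1 - (X : Polynomial ℚ) ^ (mlen (fS s hex) j)) := by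
    intro k
    induction k with
    | zero => intro _; rw [h0]; simp
    | succ k ih =>
      intro hk
      rw [Finset.prod_range_succ, ih (by omega), Finset.range_eq_Ico]
      rw [Finset.range_eq_Ico]
      exact Finset.prod_Ico_consecutive (fun j => (1 - (X : Polynomial ℚ) ^ (mlen (fS s hex) j))) (Nat.zero_le (s k)) (s_le hmono k (k + 1) (by omega) hk)
  rw [hA, Finset.prod_congr rfl (fun b hb => hB b (by rw [Finset.mem_range] at hb; omega)),
    hC (l + 1) (le_refl _), hn]

end FS

lemma geom_one_sub (m : ℕ) :
    (∑ i ∈ Finset.range m, (X : Polynomial ℚ) ^ i) * (1 - X) = 1 - X ^ m := by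
  have h := geom_sum_mul (X : Polynomial ℚ) m
  linear_combination -h

end Flag

/-- The inversion generating function of permutations increasing on each block
`(s_{i-1}, s_i]` is the Gaussian multinomial:
`(Σ_{σ ∈ S(n;s)} z^{inv σ}) ∏_{j=1}^{l+1} ∏_{i=1}^{s_j - s_{j-1}} (1-z^i) = ∏_{i=1}^n (1-z^i)`. -/
theorem stmt5 (n l : ℕ) (s : ℕ → ℕ) (h0 : s 0 = 0) (hn : s (l + 1) = n)
    (hmono : ∀ i ≤ l, s i < s (i + 1)) :
    (∑ σ ∈ Finset.univ.filter (fun σ : Equiv.Perm (Fin n) =>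
        ∀ i ≤ l, ∀ a b : Fin n, s i ≤ (a : ℕ) → (a : ℕ) < (b : ℕ) → (b : ℕ) < s (i + 1) →
          σ a < σ b),
        (Polynomial.X : Polynomial ℚ) ^ inversions n σ) *
      ∏ j ∈ Finset.Icc 1 (l + 1), ∏ i ∈ Finset.Icc 1 (s j - s (j - 1)),
        (1 - (Polynomial.X : Polynomial ℚ) ^ i) =
    ∏ i ∈ Finset.Icc 1 n, (1 - (Polynomial.X : Polynomial ℚ) ^ i) := by
  have hex : ∀ a : Fin n, ∃ b, (a : ℕ) < s (b + 1) := fun a => ⟨l, by rw [hn]; exact a.isLt⟩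
  have hFmono : Monotone (Flag.fS s hex) := Flag.fS_mono hex
  -- identify the filtered set with the `Incr` set
  have hfilt : Finset.univ.filter (fun σ : Equiv.Perm (Fin n) =>
        ∀ i ≤ l, ∀ a b : Fin n, s i ≤ (a : ℕ) → (a : ℕ) < (b : ℕ) → (b : ℕ) < s (i + 1) →
          σ a < σ b)
      = Finset.univ.filter (fun σ => Flag.Incr (Flag.fS s hex) σ) := by
    apply Finset.filter_congr
    intro σ _
    constructor
    · intro h a b hab heq
      refine h (Flag.fS s hex a) (Flag.fS_le hn hex a) a b (Flag.fS_lb h0 hex a) hab ?_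
      have hb := Flag.fS_spec hex b
      rw [← heq] at hb
      exact hb
    · intro h i hi a b ha hab hb
      apply h a b hab
      have h1 : Flag.fS s hex a = i := Flag.fS_eq hmono hex hi ha (by omega)
      have h2 : Flag.fS s hex b = i := Flag.fS_eq hmono hex hi (by omega) hb
      rw [h1, h2]
  rw [hfilt]
  have key1 := Flag.main_chain (Flag.fS s hex) hFmono
  have key2 := Flag.const_chain (n := n)
  have key : (∑ σ ∈ Finset.univ.filter (fun σ => Flag.Incr (Flag.fS s hex) σ),
        (X : Polynomial ℚ) ^ inversions n σ)
      * ∏ j ∈ Finset.range n, ∑ i ∈ Finset.range (Flag.mlen (Flag.fS s hex) j),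
          (X : Polynomial ℚ) ^ i
      = ∏ j ∈ Finset.range n, ∑ i ∈ Finset.range (n - j), (X : Polynomial ℚ) ^ i := by
    rw [← key1, key2]
  have hRHS : (∏ i ∈ Finset.Icc 1 n, (1 - (X : Polynomial ℚ) ^ i))
      = ∏ j ∈ Finset.range n, (1 - (X : Polynomial ℚ) ^ (n - j)) := by
    apply Finset.prod_nbij' (i := fun i => n - i) (j := fun j => n - j)
    · intro a ha; rw [Finset.mem_Icc] at ha; rw [Finset.mem_range]; omega
    · intro a ha; rw [Finset.mem_range] at ha; rw [Finset.mem_Icc]; omega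
    · intro a ha; rw [Finset.mem_Icc] at ha; omega
    · intro a ha; rw [Finset.mem_range] at ha; omega
    · intro a ha
      rw [Finset.mem_Icc] at ha
      congr 2
      omega
  rw [Flag.block_prod h0 hn hmono hex, hRHS]
  calc (∑ σ ∈ Finset.univ.filter (fun σ => Flag.Incr (Flag.fS s hex) σ),
        (X : Polynomial ℚ) ^ inversions n σ)
      * ∏ j ∈ Finset.range n, (1 - (X : Polynomial ℚ) ^ (Flag.mlen (Flag.fS s hex) j))
      = (∑ σ ∈ Finset.univ.filter (fun σ => Flag.Incr (Flag.fS s hex) σ),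
          (X : Polynomial ℚ) ^ inversions n σ)
        * ∏ j ∈ Finset.range n,
            ((∑ i ∈ Finset.range (Flag.mlen (Flag.fS s hex) j), (X : Polynomial ℚ) ^ i)
              * (1 - X)) := by
        rw [Finset.prod_congr rfl (fun j _ => (Flag.geom_one_sub (Flag.mlen (Flag.fS s hex) j)).symm)]
    _ = ((∑ σ ∈ Finset.univ.filter (fun σ => Flag.Incr (Flag.fS s hex) σ),
          (X : Polynomial ℚ) ^ inversions n σ)
        * ∏ j ∈ Finset.range n,
            (∑ i ∈ Finset.range (Flag.mlen (Flag.fS s hex) j), (X : Polynomial ℚ) ^ i))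
        * (1 - X) ^ n := by
        rw [Finset.prod_mul_distrib, Finset.prod_const, Finset.card_range, mul_assoc]
    _ = (∏ j ∈ Finset.range n, ∑ i ∈ Finset.range (n - j), (X : Polynomial ℚ) ^ i)
        * (1 - X) ^ n := by rw [key]
    _ = ∏ j ∈ Finset.range n,
          ((∑ i ∈ Finset.range (n - j), (X : Polynomial ℚ) ^ i) * (1 - X)) := by
        rw [Finset.prod_mul_distrib, Finset.prod_const, Finset.card_range]
    _ = ∏ j ∈ Finset.range n, (1 - (X : Polynomial ℚ) ^ (n - j)) :=
        Finset.prod_congr rfl (fun j _ => Flag.geom_one_sub (n - j))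
end

section
/- For l = 1 (the Grassmannian case), the combinatorial identity specializes as: Σ_{w} z^{Σ_{k≤s} ε^w_{k,(1,2]}} ∏_{k=1}^{s} (1 - t z^{ε^w_{k,(1,2]} + k - 1})^{-1} (1 - t z^{ε^w_{k,(1,2]} + k})^{-1} = [∏_{i=1}^n(1-z^i) / (∏_{i=1}^{s}(1-z^i) ∏_{i=1}^{n-s}(1-z^i))] · ∏_{i=1}^{s} (1 - t z^{i-1})^{-1} (1 - t z^{n-i+1})^{-1}, where w ranges over permutations of {1,...,n} increasing on {1,...,s} and on {s+1,...,n}, and ε^w_{k,(1,2]} = #{m : s < m ≤ n, w(k) < w(m)}. -/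
/-- `ε^w_{k,m} = 1` if `w(k) < w(m)` (1-based indices in `{1,...,n}`), else `0`. -/
def eps (n : ℕ) (w : Equiv.Perm (Fin n)) (k m : ℕ) : ℕ :=
  if h : k - 1 < n ∧ m - 1 < n then
    (if w ⟨k - 1, h.1⟩ < w ⟨m - 1, h.2⟩ then 1 else 0) else 0

/-- `ε^w_{k,(1,2]} = #{m : s < m ≤ n, w(k) < w(m)}`. -/
def epsG (n s : ℕ) (w : Equiv.Perm (Fin n)) (k : ℕ) : ℕ :=
  ∑ m ∈ Finset.Ioc s n, eps n w k m

noncomputable section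
open Finset MvPowerSeries
abbrev R2 : Type := MvPowerSeries (Fin 2) ℚ
def tt : R2 := X 0
def zz : R2 := X 1
def dd (e : ℕ) : R2 := 1 - tt * zz ^ e
def dinv (e : ℕ) : R2 := (dd e)⁻¹
def uu (i : ℕ) : R2 := 1 - zz ^ i
def uinv (i : ℕ) : R2 := (uu i)⁻¹

lemma cc_dd (e : ℕ) : constantCoeff (dd e) = 1 := by
  simp [dd, tt, zz]

lemma dd_mul_dinv (e : ℕ) : dd e * dinv e = 1 :=
  MvPowerSeries.mul_inv_cancel _ (by rw [cc_dd]; norm_num)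

lemma cc_uu (i : ℕ) (hi : 1 ≤ i) : constantCoeff (uu i) = 1 := by
  obtain ⟨j, rfl⟩ := Nat.exists_eq_add_of_le hi
  simp [uu, zz, pow_add, pow_succ]

lemma uu_mul_uinv (i : ℕ) (hi : 1 ≤ i) : uu i * uinv i = 1 :=
  MvPowerSeries.mul_inv_cancel _ (by rw [cc_uu i hi]; norm_num)

def Uprod (n : ℕ) : R2 := ∏ i ∈ Icc 1 n, uu i
def Vprod (k : ℕ) : R2 := ∏ i ∈ Icc 1 k, uinv i
def qb (n k : ℕ) : R2 := Uprod n * Vprod k * Vprod (n - k)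

lemma Uprod_succ (n : ℕ) : Uprod (n+1) = Uprod n * uu (n+1) := by
  rw [Uprod, Uprod, Finset.prod_Icc_succ_top (by omega)]

lemma Vprod_succ (k : ℕ) : Vprod (k+1) = Vprod k * uinv (k+1) := by
  rw [Vprod, Vprod, Finset.prod_Icc_succ_top (by omega)]

lemma Vprod_mul_uu (k : ℕ) : Vprod (k+1) * uu (k+1) = Vprod k := by
  rw [Vprod_succ, mul_assoc, mul_comm (uinv _), uu_mul_uinv _ (by omega), mul_one]

lemma Uprod_mul_Vprod (n : ℕ) : Uprod n * Vprod n = 1 := by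
  induction n with
  | zero => simp [Uprod, Vprod]
  | succ n ih =>
    rw [Uprod_succ, Vprod_succ, show Uprod n * uu (n+1) * (Vprod n * uinv (n+1)) =
      (Uprod n * Vprod n) * (uu (n+1) * uinv (n+1)) by ring,
      ih, uu_mul_uinv _ (by omega), mul_one]

lemma qb_self (n : ℕ) : qb n n = 1 := by
  rw [qb, Nat.sub_self, Uprod_mul_Vprod]; simp [Vprod]

lemma qb_zero (n : ℕ) : qb n 0 = 1 := by
  rw [qb]
  have : Vprod 0 = 1 := by simp [Vprod]
  rw [Nat.sub_zero, this, mul_one, Uprod_mul_Vprod]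

lemma uu_split (k m : ℕ) : uu (k+m+2) = uu (m+1) + zz^(m+1) * uu (k+1) := by
  simp only [uu]; ring

lemma uu_split' (k m : ℕ) : uu (k+m+2) = zz^(k+1) * uu (m+1) + uu (k+1) := by
  simp only [uu]; ring

lemma qb_P1 (k m : ℕ) :
    qb (k+m+2) (k+1) = qb (k+m+1) (k+1) + zz^(m+1) * qb (k+m+1) k := by
  have h1 : qb (k+m+2) (k+1) = Uprod (k+m+1) * Vprod (k+1) * Vprod (m+1) * uu (k+m+2) := by
    rw [qb, show k+m+2-(k+1) = m+1 by omega, Uprod_succ]; ring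
  have h2 : qb (k+m+1) (k+1) = Uprod (k+m+1) * Vprod (k+1) * Vprod (m+1) * uu (m+1) := by
    rw [qb, show k+m+1-(k+1) = m by omega, ← Vprod_mul_uu m]; ring
  have h3 : qb (k+m+1) k = Uprod (k+m+1) * Vprod (k+1) * Vprod (m+1) * uu (k+1) := by
    rw [qb, show k+m+1-k = m+1 by omega, ← Vprod_mul_uu k]; ring
  rw [h1, h2, h3, uu_split k m]; ring

lemma qb_P2 (k m : ℕ) :
    qb (k+m+2) (k+1) = zz^(k+1) * qb (k+m+1) (k+1) + qb (k+m+1) k := by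
  have h1 : qb (k+m+2) (k+1) = Uprod (k+m+1) * Vprod (k+1) * Vprod (m+1) * uu (k+m+2) := by
    rw [qb, show k+m+2-(k+1) = m+1 by omega, Uprod_succ]; ring
  have h2 : qb (k+m+1) (k+1) = Uprod (k+m+1) * Vprod (k+1) * Vprod (m+1) * uu (m+1) := by
    rw [qb, show k+m+1-(k+1) = m by omega, ← Vprod_mul_uu m]; ring
  have h3 : qb (k+m+1) k = Uprod (k+m+1) * Vprod (k+1) * Vprod (m+1) * uu (k+1) := by
    rw [qb, show k+m+1-k = m+1 by omega, ← Vprod_mul_uu k]; ring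
  rw [h1, h2, h3, uu_split' k m]; ring

/-- The key cleared identity K. -/
lemma keyK (k m r : ℕ) :
    qb (k+m+2) (k+1) * dd (r+m+1) =
      qb (k+m+1) (k+1) * dd (r+m+k+2) + zz^(m+1) * qb (k+m+1) k * dd r := by
  have p1 := qb_P1 k m
  have p2 := qb_P2 k m
  simp only [dd]
  linear_combination p1 - tt * zz^(r+m+1) * p2
def G : ℕ → ℕ → ℕ → R2
  | 0, _, _ => 1
  | s+1, m, r => ∑ j ∈ range (m+1), zz^j * dinv (j+r) * dinv (j+r+1) * G s j (r+1)

lemma prod_dinv_congr {s : ℕ} (c c' : ℕ) (h : ∀ i, c + i = c' + i) :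
    (∏ i ∈ range s, dinv (c+i)) = ∏ i ∈ range s, dinv (c'+i) := by
  exact Finset.prod_congr rfl fun i _ => by rw [h i]

lemma prod_dinv_succ_bot (c s : ℕ) :
    (∏ i ∈ range (s+1), dinv (c+i)) = dinv c * ∏ i ∈ range s, dinv (c+1+i) := by
  rw [Finset.prod_range_succ']
  simp only [add_zero]
  rw [mul_comm]
  congr 1
  exact Finset.prod_congr rfl fun i _ => congrArg dinv (by omega)

lemma prod_dinv_succ_top (c s : ℕ) :
    (∏ i ∈ range (s+1), dinv (c+i)) = (∏ i ∈ range s, dinv (c+i)) * dinv (c+s) :=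
  Finset.prod_range_succ _ _

lemma innerSumG (s r : ℕ) : ∀ M,
    (∑ j ∈ range (M+1), zz^j * dinv (j+r) * dinv (j+r+1) *
        (qb (s+j) s * (∏ i ∈ range s, dinv (r+1+i)) * (∏ i ∈ range s, dinv (r+1+j+1+i)))) =
    qb (s+1+M) (s+1) * (∏ i ∈ range (s+1), dinv (r+i)) * (∏ i ∈ range (s+1), dinv (r+M+1+i)) := by
  intro M
  induction M with
  | zero =>
    rw [Finset.sum_range_one, qb_self, show s + 0 = s from rfl, qb_self,
      prod_dinv_succ_bot r s, prod_dinv_succ_bot (r+0+1) s]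
    rw [prod_dinv_congr (r+1+0+1) (r+0+1+1) (by omega)]
    simp only [pow_zero, zero_add, one_mul]
    ring
  | succ M ih =>
    rw [Finset.sum_range_succ, ih]
    set Full : R2 := ∏ i ∈ range (s+2), dinv (r+M+1+i) with hFull
    have hα : (∏ i ∈ range (s+1), dinv (r+(M+1)+1+i)) = Full * dd (r+M+1) := by
      rw [hFull, prod_dinv_succ_bot (r+M+1) (s+1), prod_dinv_congr (r+(M+1)+1) (r+M+1+1) (by omega)]
      rw [show dinv (r+M+1) * (∏ i ∈ range (s+1), dinv (r+M+1+1+i)) * dd (r+M+1) =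
        (dd (r+M+1) * dinv (r+M+1)) * (∏ i ∈ range (s+1), dinv (r+M+1+1+i)) by ring,
        dd_mul_dinv, one_mul]
    have hβ : (∏ i ∈ range (s+1), dinv (r+M+1+i)) = Full * dd (r+M+s+2) := by
      rw [hFull, show s+2 = (s+1)+1 from rfl, prod_dinv_succ_top (r+M+1) (s+1),
        show r+M+1+(s+1) = r+M+s+2 by omega, mul_assoc,
        mul_comm (dinv _) (dd _), dd_mul_dinv, mul_one]
    have hγ : dinv (M+1+r) * dinv (M+1+r+1) * (∏ i ∈ range s, dinv (r+1+(M+1)+1+i)) = Full := by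
      rw [hFull, prod_dinv_succ_bot (r+M+1) (s+1), prod_dinv_succ_bot (r+M+1+1) s,
        prod_dinv_congr (r+1+(M+1)+1) (r+M+1+1+1) (by omega),
        show M+1+r = r+M+1 by omega]
      ring
    rw [show s+1+M = s+M+1 by omega, show s+1+(M+1) = s+M+2 by omega,
      show s+(M+1) = s+M+1 by omega, hα, hβ]
    have hδ : (∏ i ∈ range (s+1), dinv (r+i)) * dd r =
        (∏ i ∈ range s, dinv (r+1+i)) := by
      rw [prod_dinv_succ_bot r s,
        show dinv r * (∏ i ∈ range s, dinv (r+1+i)) * dd r =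
          (dd r * dinv r) * ∏ i ∈ range s, dinv (r+1+i) by ring, dd_mul_dinv, one_mul]
    have K := keyK s M r
    linear_combination (-((∏ i ∈ range (s+1), dinv (r+i)) * Full)) * K +
      (zz^(M+1) * qb (s+M+1) s * (∏ i ∈ range s, dinv (r+1+i))) * hγ -
      (zz^(M+1) * qb (s+M+1) s * Full) * hδ

theorem G_closed (s : ℕ) : ∀ m r, G s m r =
    qb (s+m) s * (∏ i ∈ range s, dinv (r+i)) * (∏ i ∈ range s, dinv (r+m+1+i)) := by
  induction s with
  | zero => intro m r; simp [G, qb_zero]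
  | succ s ih =>
    intro m r
    rw [G]
    have : ∀ j ∈ range (m+1), zz^j * dinv (j+r) * dinv (j+r+1) * G s j (r+1) =
        zz^j * dinv (j+r) * dinv (j+r+1) *
          (qb (s+j) s * (∏ i ∈ range s, dinv (r+1+i)) * (∏ i ∈ range s, dinv (r+1+j+1+i))) := by
      intro j _; rw [ih j (r+1)]
    rw [Finset.sum_congr rfl this, innerSumG s r m]
def AT (s m : ℕ) : Finset (Fin s → ℕ) :=
  (Fintype.piFinset (fun _ : Fin s => Finset.range (m+1))).filter
    (fun f => ∀ i j : Fin s, i ≤ j → f j ≤ f i)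

lemma mem_AT {s m : ℕ} {f : Fin s → ℕ} :
    f ∈ AT s m ↔ (∀ i, f i ≤ m) ∧ (∀ i j : Fin s, i ≤ j → f j ≤ f i) := by
  simp [AT, Fintype.mem_piFinset, Nat.lt_succ_iff]

def TS (s m r : ℕ) : R2 :=
  ∑ f ∈ AT s m, zz ^ (∑ k, f k) * ∏ k : Fin s, (dinv (f k + k + r) * dinv (f k + k + r + 1))

lemma TS_eq_G (s : ℕ) : ∀ m r, TS s m r = G s m r := by
  induction s with
  | zero =>
    intro m r
    rw [G, TS]
    have h1 : AT 0 m = {fun i : Fin 0 => (0:ℕ)} := by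
      apply Finset.eq_singleton_iff_unique_mem.mpr
      constructor
      · rw [mem_AT]; exact ⟨fun i => i.elim0, fun i => i.elim0⟩
      · intro f _; exact Subsingleton.elim _ _
    rw [h1, Finset.sum_singleton]
    simp
  | succ s ih =>
    intro m r
    rw [G]
    have key : ∀ j ∈ range (m+1),
        (∑ f ∈ (AT (s+1) m).filter (fun f => f 0 = j),
          zz ^ (∑ k, f k) * ∏ k : Fin (s+1), (dinv (f k + k + r) * dinv (f k + k + r + 1))) =
        zz^j * dinv (j+r) * dinv (j+r+1) * G s j (r+1) := by
      intro j hj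
      rw [Finset.mem_range, Nat.lt_succ_iff] at hj
      rw [← ih j (r+1), TS, Finset.mul_sum]
      apply Finset.sum_nbij' (i := fun f => Fin.tail f) (j := fun g => Fin.cons j g)
      · intro f hf
        rw [Finset.mem_filter] at hf
        obtain ⟨hfA, hf0⟩ := hf
        rw [mem_AT] at hfA ⊢
        refine ⟨fun i => ?_, fun i i' hii => hfA.2 _ _ (Fin.succ_le_succ_iff.mpr hii)⟩
        calc Fin.tail f i = f i.succ := rfl
          _ ≤ f 0 := hfA.2 0 i.succ (Fin.zero_le _)
          _ = j := hf0
      · intro g hg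
        rw [mem_AT] at hg
        rw [Finset.mem_filter, mem_AT]
        refine ⟨⟨fun i => ?_, fun i i' hii => ?_⟩, Fin.cons_zero _ _⟩
        · rcases Fin.eq_zero_or_eq_succ i with h0 | ⟨k, rfl⟩
          · rw [h0, Fin.cons_zero]; exact hj
          · rw [Fin.cons_succ]; exact le_trans (hg.1 k) hj
        · rcases Fin.eq_zero_or_eq_succ i with h0 | ⟨k, rfl⟩
          · rcases Fin.eq_zero_or_eq_succ i' with h0' | ⟨k', rfl⟩
            · rw [h0, h0']
            · rw [h0, Fin.cons_zero, Fin.cons_succ]; exact hg.1 k'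
          · rcases Fin.eq_zero_or_eq_succ i' with h0' | ⟨k', rfl⟩
            · exfalso; rw [h0'] at hii; exact absurd (Fin.le_zero_iff.mp hii) (Fin.succ_ne_zero k)
            · rw [Fin.cons_succ, Fin.cons_succ]
              exact hg.2 k k' (Fin.succ_le_succ_iff.mp hii)
      · intro f hf
        rw [Finset.mem_filter] at hf
        rw [← hf.2]; exact Fin.cons_self_tail f
      · intro g hg
        funext k
        simp [Fin.tail, Fin.cons_succ]
      · intro f hf
        rw [Finset.mem_filter] at hf
        obtain ⟨hfA, hf0⟩ := hf
        rw [Fin.sum_univ_succ, Fin.prod_univ_succ]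
        simp only [Fin.tail, Fin.val_succ, Fin.val_zero, add_zero, pow_add]
        rw [hf0]
        rw [show (∏ k : Fin s, (dinv (f k.succ + ((k:ℕ)+1) + r) * dinv (f k.succ + ((k:ℕ)+1) + r + 1))) =
            ∏ k : Fin s, (dinv (f k.succ + (k:ℕ) + (r+1)) * dinv (f k.succ + (k:ℕ) + (r+1) + 1)) from
          Finset.prod_congr rfl fun k _ => by
            rw [show f k.succ + ((k:ℕ)+1) + r = f k.succ + (k:ℕ) + (r+1) by omega]]
        ring
    rw [← Finset.sum_congr rfl key, TS,
      Finset.sum_fiberwise_of_maps_to (fun f hf => Finset.mem_range.mpr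
        (Nat.lt_succ_iff.mpr ((mem_AT.mp hf).1 0))) _]
lemma epsG_eq (n s : ℕ) (hn : 0 < n) (w : Equiv.Perm (Fin n)) (k : ℕ) (hk : k < n) :
    epsG n s w (k+1) =
      ((Finset.univ.filter (fun i : Fin n => s ≤ (i:ℕ) ∧ w ⟨k, hk⟩ < w i))).card := by
  rw [epsG]
  have h1 : ∀ m ∈ Finset.Ioc s n, eps n w (k+1) m =
      if (w ⟨k, hk⟩ < w ⟨(m-1) % n, Nat.mod_lt _ hn⟩) then 1 else 0 := by
    intro m hm
    rw [Finset.mem_Ioc] at hm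
    rw [eps]
    have hc : k+1-1 < n ∧ m-1 < n := ⟨by omega, by omega⟩
    rw [dif_pos hc]
    refine if_congr ?_ rfl rfl
    rw [show (⟨k+1-1, hc.1⟩ : Fin n) = ⟨k, hk⟩ from Fin.ext rfl,
        show (⟨m-1, hc.2⟩ : Fin n) = ⟨(m-1)%n, Nat.mod_lt _ hn⟩ from
          Fin.ext (by simp [Nat.mod_eq_of_lt (show m-1<n by omega)])]
  rw [Finset.sum_congr rfl h1, ← Finset.sum_filter_add_sum_filter_not _
    (fun m => w ⟨k, hk⟩ < w ⟨(m-1) % n, Nat.mod_lt _ hn⟩)]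
  rw [Finset.sum_ite_of_true (by intro m hm; exact (Finset.mem_filter.mp hm).2),
    Finset.sum_ite_of_false (by intro m hm; exact (Finset.mem_filter.mp hm).2),
    Finset.sum_const, Finset.sum_const_zero, add_zero, smul_eq_mul, mul_one]
  apply Finset.card_nbij' (i := fun m : ℕ => (⟨(m-1) % n, Nat.mod_lt _ hn⟩ : Fin n))
    (j := fun i : Fin n => (i:ℕ)+1)
  · intro m hm
    rw [Finset.mem_coe, Finset.mem_filter] at hm ⊢
    obtain ⟨hm1, hm2⟩ := hm
    rw [Finset.mem_Ioc] at hm1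
    refine ⟨Finset.mem_univ _, ?_, hm2⟩
    simp only [Nat.mod_eq_of_lt (show m-1 < n by omega)]
    omega
  · intro i hi
    rw [Finset.mem_coe, Finset.mem_filter] at hi ⊢
    obtain ⟨-, hi1, hi2⟩ := hi
    have hiv : (i:ℕ) < n := i.2
    refine ⟨Finset.mem_Ioc.mpr ⟨by beta_reduce; omega, by beta_reduce; omega⟩, ?_⟩
    have he : (⟨((i:ℕ)+1-1)%n, Nat.mod_lt _ hn⟩ : Fin n) = i :=
      Fin.ext (by simp [Nat.mod_eq_of_lt hiv])
    rw [he]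
    exact hi2
  · intro m hm
    rw [Finset.mem_coe, Finset.mem_filter, Finset.mem_Ioc] at hm
    simp only [Nat.mod_eq_of_lt (show m-1 < n by omega)]
    omega
  · intro i hi
    exact Fin.ext (by simp [Nat.mod_eq_of_lt i.2])
lemma count_above {n : ℕ} (a : Fin n) :
    (Finset.univ.filter (fun x : Fin n => a < x)).card + (a:ℕ) + 1 = n := by
  have h : Finset.univ.filter (fun x : Fin n => a < x) = Finset.Ioi a := by
    ext x; simp
  rw [h, Fin.card_Ioi]
  have := a.2
  omega

lemma count_above_perm {n : ℕ} (w : Equiv.Perm (Fin n)) (a : Fin n) :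
    (Finset.univ.filter (fun i : Fin n => a < w i)).card =
    (Finset.univ.filter (fun x : Fin n => a < x)).card := by
  apply Finset.card_nbij' (i := fun i => w i) (j := fun x => w.symm x)
  · intro i hi; rw [Finset.mem_coe, Finset.mem_filter] at hi ⊢; exact ⟨Finset.mem_univ _, hi.2⟩
  · intro x hx; rw [Finset.mem_coe, Finset.mem_filter] at hx ⊢
    exact ⟨Finset.mem_univ _, by rw [Equiv.apply_symm_apply]; exact hx.2⟩
  · intro i _; exact w.symm_apply_apply i
  · intro x _; exact w.apply_symm_apply x

lemma count_split {n s : ℕ} (w : Equiv.Perm (Fin n)) (a : Fin n) :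
    (Finset.univ.filter (fun i : Fin n => s ≤ (i:ℕ) ∧ a < w i)).card +
    (Finset.univ.filter (fun i : Fin n => (i:ℕ) < s ∧ a < w i)).card =
    (Finset.univ.filter (fun i : Fin n => a < w i)).card := by
  have h1 : Finset.univ.filter (fun i : Fin n => s ≤ (i:ℕ) ∧ a < w i) =
      (Finset.univ.filter (fun i : Fin n => a < w i)).filter (fun i : Fin n => s ≤ (i:ℕ)) := by
    ext i; simp; tauto
  have h2 : Finset.univ.filter (fun i : Fin n => (i:ℕ) < s ∧ a < w i) =
      (Finset.univ.filter (fun i : Fin n => a < w i)).filter (fun i : Fin n => ¬ (s ≤ (i:ℕ))) := by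
    ext i; simp; omega
  rw [h1, h2, Finset.card_filter_add_card_filter_not]

lemma count_first {n s : ℕ} (w : Equiv.Perm (Fin n))
    (hmono : ∀ a b : Fin n, (a:ℕ) < (b:ℕ) → (b:ℕ) < s → w a < w b)
    (k : ℕ) (hk : k < s) (hkn : k < n) (hsn : s ≤ n) :
    (Finset.univ.filter (fun i : Fin n => (i:ℕ) < s ∧ w ⟨k, hkn⟩ < w i)).card + (k + 1) = s := by
  have hn : 0 < n := by omega
  have hiff : ∀ i : Fin n, (i:ℕ) < s → (w ⟨k, hkn⟩ < w i ↔ k < (i:ℕ)) := by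
    intro i his
    constructor
    · intro hlt
      by_contra hle
      push_neg at hle
      rcases Nat.lt_or_ge (i:ℕ) k with h | h
      · exact absurd (hmono i ⟨k, hkn⟩ h hk) (by exact lt_asymm hlt)
      · have : (i:ℕ) = k := by omega
        have : i = ⟨k, hkn⟩ := Fin.ext this
        rw [this] at hlt; exact lt_irrefl _ hlt
    · intro hlt; exact hmono ⟨k, hkn⟩ i hlt his
  have h1 : Finset.univ.filter (fun i : Fin n => (i:ℕ) < s ∧ w ⟨k, hkn⟩ < w i) =
      Finset.univ.filter (fun i : Fin n => (i:ℕ) < s ∧ k < (i:ℕ)) := by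
    ext i
    simp only [Finset.mem_filter, Finset.mem_univ, true_and]
    exact ⟨fun ⟨h1, h2⟩ => ⟨h1, (hiff i h1).mp h2⟩, fun ⟨h1, h2⟩ => ⟨h1, (hiff i h1).mpr h2⟩⟩
  rw [h1]
  have h2 : (Finset.univ.filter (fun i : Fin n => (i:ℕ) < s ∧ k < (i:ℕ))).card =
      (Finset.Ico (k+1) s).card := by
    apply Finset.card_nbij' (i := fun i : Fin n => (i:ℕ)) (j := fun m => (⟨m % n, Nat.mod_lt _ hn⟩ : Fin n))
    · intro i hi; rw [Finset.mem_coe, Finset.mem_filter] at hi; rw [Finset.mem_coe, Finset.mem_Ico]; beta_reduce; omega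
    · intro m hm
      rw [Finset.mem_coe, Finset.mem_Ico] at hm
      rw [Finset.mem_coe, Finset.mem_filter]
      have : m % n = m := Nat.mod_eq_of_lt (by omega)
      simp only [this]
      exact ⟨Finset.mem_univ _, by omega, by omega⟩
    · intro i hi
      exact Fin.ext (by simp [Nat.mod_eq_of_lt i.2])
    · intro m hm
      rw [Finset.mem_coe, Finset.mem_Ico] at hm
      simp [Nat.mod_eq_of_lt (show m < n by omega)]
  rw [h2, Nat.card_Ico]
  omega

/-- Master counting lemma. -/
lemma count_key {n s : ℕ} (w : Equiv.Perm (Fin n))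
    (hmono : ∀ a b : Fin n, (a:ℕ) < (b:ℕ) → (b:ℕ) < s → w a < w b)
    (k : ℕ) (hk : k < s) (hsn : s < n) :
    epsG n s w (k+1) + (s - (k+1)) + ((w ⟨k, by omega⟩ : Fin n) : ℕ) + 1 = n := by
  have hkn : k < n := by omega
  have e1 := epsG_eq n s (by omega) w k hkn
  have e2 := count_split (s := s) w (w ⟨k, hkn⟩)
  have e3 := count_above_perm w (w ⟨k, hkn⟩)
  have e4 := count_above (w ⟨k, hkn⟩)
  have e5 := count_first w hmono k hk hkn (by omega)
  omega
def gfun (n s : ℕ) (hsn : s < n) (f : Fin s → ℕ) : Fin s → Fin n :=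
  fun k => ⟨(k:ℕ) + (n - s - f k), by
    have h2 := k.2
    have h3 := Nat.sub_le (n-s) (f k)
    omega⟩

lemma gfun_strictMono {n s : ℕ} (hsn : s < n) {f : Fin s → ℕ}
    (hf2 : ∀ i j : Fin s, i ≤ j → f j ≤ f i) : StrictMono (gfun n s hsn f) := by
  intro k k' h
  have h1 : f k' ≤ f k := hf2 k k' h.le
  have h2 : n - s - f k ≤ n - s - f k' := Nat.sub_le_sub_left h1 _
  have h3 : (k:ℕ) < (k':ℕ) := h
  simp only [gfun, Fin.mk_lt_mk, Fin.lt_def]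
  omega

def Sset (n s : ℕ) (hsn : s < n) (f : Fin s → ℕ) : Finset (Fin n) :=
  Finset.image (gfun n s hsn f) Finset.univ

lemma Sset_compl_card {n s : ℕ} (hsn : s < n) {f : Fin s → ℕ}
    (hf2 : ∀ i j : Fin s, i ≤ j → f j ≤ f i) : (Sset n s hsn f)ᶜ.card = n - s := by
  rw [Finset.card_compl, Sset,
    Finset.card_image_of_injective _ (gfun_strictMono hsn hf2).injective]
  simp

open scoped Classical in
noncomputable def wfun (n s : ℕ) (hsn : s < n) (f : Fin s → ℕ) : Fin n → Fin n :=
  if hf2 : (∀ i j : Fin s, i ≤ j → f j ≤ f i) then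
    fun i =>
      if h : (i:ℕ) < s then gfun n s hsn f ⟨i, h⟩
      else ((Sset n s hsn f)ᶜ.orderEmbOfFin (Sset_compl_card hsn hf2))
        ⟨(i:ℕ) - s, by have := i.2; omega⟩
  else id

lemma wfun_lt {n s : ℕ} (hsn : s < n) {f : Fin s → ℕ}
    (hf2 : ∀ i j : Fin s, i ≤ j → f j ≤ f i) {i : Fin n} (h : (i:ℕ) < s) :
    wfun n s hsn f i = gfun n s hsn f ⟨i, h⟩ := by
  rw [wfun, dif_pos hf2, dif_pos h]

lemma wfun_ge {n s : ℕ} (hsn : s < n) {f : Fin s → ℕ}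
    (hf2 : ∀ i j : Fin s, i ≤ j → f j ≤ f i) {i : Fin n} (h : ¬ ((i:ℕ) < s)) :
    wfun n s hsn f i = ((Sset n s hsn f)ᶜ.orderEmbOfFin (Sset_compl_card hsn hf2))
      ⟨(i:ℕ) - s, by have := i.2; omega⟩ := by
  rw [wfun, dif_pos hf2, dif_neg h]

lemma wfun_inj {n s : ℕ} (hsn : s < n) {f : Fin s → ℕ}
    (hf2 : ∀ i j : Fin s, i ≤ j → f j ≤ f i) : Function.Injective (wfun n s hsn f) := by
  intro a b hab
  by_cases ha : (a:ℕ) < s <;> by_cases hb : (b:ℕ) < s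
  · rw [wfun_lt hsn hf2 ha, wfun_lt hsn hf2 hb] at hab
    have := (gfun_strictMono hsn hf2).injective hab
    exact Fin.ext (congrArg Fin.val this : ((⟨a, ha⟩ : Fin s) : ℕ) = _)
  · exfalso
    rw [wfun_lt hsn hf2 ha, wfun_ge hsn hf2 hb] at hab
    have h1 : gfun n s hsn f ⟨a, ha⟩ ∈ Sset n s hsn f :=
      Finset.mem_image_of_mem _ (Finset.mem_univ _)
    have h2 := Finset.orderEmbOfFin_mem ((Sset n s hsn f)ᶜ) (Sset_compl_card hsn hf2)
      ⟨(b:ℕ) - s, by have := b.2; omega⟩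
    rw [← hab] at h2
    exact (Finset.mem_compl.mp h2) h1
  · exfalso
    rw [wfun_ge hsn hf2 ha, wfun_lt hsn hf2 hb] at hab
    have h1 : gfun n s hsn f ⟨b, hb⟩ ∈ Sset n s hsn f :=
      Finset.mem_image_of_mem _ (Finset.mem_univ _)
    have h2 := Finset.orderEmbOfFin_mem ((Sset n s hsn f)ᶜ) (Sset_compl_card hsn hf2)
      ⟨(a:ℕ) - s, by have := a.2; omega⟩
    rw [hab] at h2
    exact (Finset.mem_compl.mp h2) h1
  · rw [wfun_ge hsn hf2 ha, wfun_ge hsn hf2 hb] at hab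
    have := ((Sset n s hsn f)ᶜ.orderEmbOfFin (Sset_compl_card hsn hf2)).injective hab
    have hv : (a:ℕ) - s = (b:ℕ) - s := congrArg Fin.val this
    exact Fin.ext (by omega)

noncomputable def wperm (n s : ℕ) (hsn : s < n) (f : Fin s → ℕ)
    (hf2 : ∀ i j : Fin s, i ≤ j → f j ≤ f i) : Equiv.Perm (Fin n) :=
  Equiv.ofBijective (wfun n s hsn f) (Finite.injective_iff_bijective.mp (wfun_inj hsn hf2))

lemma wperm_apply {n s : ℕ} (hsn : s < n) (f : Fin s → ℕ)
    (hf2 : ∀ i j : Fin s, i ≤ j → f j ≤ f i) (i : Fin n) :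
    wperm n s hsn f hf2 i = wfun n s hsn f i := rfl

lemma wperm_shuffle {n s : ℕ} (hsn : s < n) (f : Fin s → ℕ)
    (hf2 : ∀ i j : Fin s, i ≤ j → f j ≤ f i) :
    ∀ a b : Fin n, (a:ℕ) < (b:ℕ) → (((b:ℕ) < s) ∨ (s ≤ (a:ℕ))) →
      wperm n s hsn f hf2 a < wperm n s hsn f hf2 b := by
  intro a b hab hor
  rcases hor with hbs | has
  · have ha : (a:ℕ) < s := by omega
    rw [wperm_apply, wperm_apply, wfun_lt hsn hf2 ha, wfun_lt hsn hf2 hbs]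
    exact gfun_strictMono hsn hf2 (show ((⟨a, ha⟩ : Fin s)) < ⟨b, hbs⟩ from hab)
  · have hb : ¬ ((b:ℕ) < s) := by omega
    rw [wperm_apply, wperm_apply, wfun_ge hsn hf2 (by omega), wfun_ge hsn hf2 hb]
    exact ((Sset n s hsn f)ᶜ.orderEmbOfFin (Sset_compl_card hsn hf2)).strictMono
      (show ((⟨(a:ℕ)-s, _⟩ : Fin (n-s))) < ⟨(b:ℕ)-s, _⟩ from by
        simp only [Fin.mk_lt_mk]; omega)
lemma wperm_mono_first {n s : ℕ} (hsn : s < n) (f : Fin s → ℕ)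
    (hf2 : ∀ i j : Fin s, i ≤ j → f j ≤ f i) :
    ∀ a b : Fin n, (a:ℕ) < (b:ℕ) → (b:ℕ) < s →
      wperm n s hsn f hf2 a < wperm n s hsn f hf2 b :=
  fun a b hab hbs => wperm_shuffle hsn f hf2 a b hab (Or.inl hbs)

/-- Right inverse: the eps-tuple of the constructed shuffle is `f`. -/
lemma epsG_wperm {n s : ℕ} (hsn : s < n) (f : Fin s → ℕ)
    (hf1 : ∀ i, f i ≤ n - s) (hf2 : ∀ i j : Fin s, i ≤ j → f j ≤ f i) (k : Fin s) :
    epsG n s (wperm n s hsn f hf2) ((k:ℕ)+1) = f k := by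
  have hk : (k:ℕ) < s := k.2
  have hc := count_key (wperm n s hsn f hf2) (wperm_mono_first hsn f hf2) k hk hsn
  have hv : ((wperm n s hsn f hf2 ⟨(k:ℕ), by omega⟩ : Fin n) : ℕ) = (k:ℕ) + (n - s - f k) := by
    rw [wperm_apply, wfun_lt hsn hf2 (show ((⟨(k:ℕ), by omega⟩ : Fin n) : ℕ) < s from hk)]
    simp only [gfun]
  rw [hv] at hc
  have := hf1 k
  omega

lemma first_ge {n s : ℕ} (w : Equiv.Perm (Fin n))
    (hmono : ∀ a b : Fin n, (a:ℕ) < (b:ℕ) → (b:ℕ) < s → w a < w b) :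
    ∀ k (hkn : k < n), k < s → k ≤ ((w ⟨k, hkn⟩ : Fin n) : ℕ) := by
  intro k
  induction k with
  | zero => intro hkn _; omega
  | succ k ih =>
    intro hkn hks
    have h1 := ih (by omega) (by omega)
    have h2 : w ⟨k, by omega⟩ < w ⟨k+1, hkn⟩ := hmono _ _ (by simp) hks
    have h3 : ((w ⟨k, by omega⟩ : Fin n) : ℕ) < (w ⟨k+1, hkn⟩ : ℕ) := h2
    omega

section Main
variable {n s : ℕ} {w : Equiv.Perm (Fin n)}

lemma hmono_of_hw (hw : ∀ a b : Fin n, (a : ℕ) < (b : ℕ) → (((b : ℕ) < s) ∨ (s ≤ (a : ℕ))) → w a < w b) : ∀ a b : Fin n, (a:ℕ) < (b:ℕ) → (b:ℕ) < s → w a < w b :=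
  fun a b hab hbs => hw a b hab (Or.inl hbs)

lemma Fw_le (hsn : s < n)
    (hw : ∀ a b : Fin n, (a : ℕ) < (b : ℕ) → (((b : ℕ) < s) ∨ (s ≤ (a : ℕ))) → w a < w b)
    (k : Fin s) : epsG n s w ((k:ℕ)+1) ≤ n - s := by
  have hc := count_key w (hmono_of_hw hw) k k.2 hsn
  have hg := first_ge w (hmono_of_hw hw) k (by have := k.2; omega) k.2
  omega

lemma Fw_anti (hsn : s < n)
    (hw : ∀ a b : Fin n, (a : ℕ) < (b : ℕ) → (((b : ℕ) < s) ∨ (s ≤ (a : ℕ))) → w a < w b)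
    (i j : Fin s) (hij : i ≤ j) :
    epsG n s w ((j:ℕ)+1) ≤ epsG n s w ((i:ℕ)+1) := by
  have hin : (i:ℕ) < n := by have := i.2; omega
  have hjn : (j:ℕ) < n := by have := j.2; omega
  rw [epsG_eq n s (by omega) w i hin, epsG_eq n s (by omega) w j hjn]
  apply Finset.card_le_card
  intro x hx
  rw [Finset.mem_filter] at hx ⊢
  refine ⟨hx.1, hx.2.1, lt_of_le_of_lt ?_ hx.2.2⟩
  rcases eq_or_lt_of_le hij with h | h
  · rw [show (⟨(i:ℕ), hin⟩ : Fin n) = ⟨(j:ℕ), hjn⟩ from Fin.ext (show (i:ℕ) = (j:ℕ) from congrArg Fin.val h)]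
  · exact le_of_lt (hmono_of_hw hw _ _ h j.2)

/-- Left inverse: the shuffle built from the eps-tuple of `w` is `w`. -/
lemma wperm_Fw (hsn : s < n)
    (hw : ∀ a b : Fin n, (a : ℕ) < (b : ℕ) → (((b : ℕ) < s) ∨ (s ≤ (a : ℕ))) → w a < w b) :
    wperm n s hsn (fun k : Fin s => epsG n s w ((k:ℕ)+1))
      (fun i j hij => Fw_anti hsn hw i j hij) = w := by
  set f : Fin s → ℕ := fun k : Fin s => epsG n s w ((k:ℕ)+1) with hf
  have hf2 : ∀ i j : Fin s, i ≤ j → f j ≤ f i := fun i j hij => Fw_anti hsn hw i j hij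
  have hgw : ∀ k : Fin s, ∀ hkn : (k:ℕ) < n, gfun n s hsn f k = w ⟨(k:ℕ), hkn⟩ := by
    intro k hkn
    have hc := count_key w (hmono_of_hw hw) k k.2 hsn
    have hg := first_ge w (hmono_of_hw hw) k hkn k.2
    have hle := Fw_le hsn hw k
    apply Fin.ext
    simp only [gfun, hf]
    omega
  apply Equiv.ext
  intro i
  by_cases hi : (i:ℕ) < s
  · rw [wperm_apply, wfun_lt hsn hf2 hi, hgw ⟨i, hi⟩ i.2]
  · rw [wperm_apply, wfun_ge hsn hf2 hi]
    have hcompl : ∀ j : Fin (n-s), w ⟨s+(j:ℕ), by have := j.2; omega⟩ ∈ (Sset n s hsn f)ᶜ := by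
      intro j
      rw [Finset.mem_compl, Sset, Finset.mem_image]
      rintro ⟨k, -, hk⟩
      rw [hgw k (by have := k.2; omega)] at hk
      have := w.injective hk
      have hv : (k:ℕ) = s + (j:ℕ) := congrArg Fin.val this
      have := k.2
      omega
    have hsm : StrictMono (fun j : Fin (n-s) => w ⟨s+(j:ℕ), by have := j.2; omega⟩) := by
      intro a b hab
      exact hw _ _ (by simpa using hab) (Or.inr (by simp))
    have huniq := Finset.orderEmbOfFin_unique (Sset_compl_card hsn hf2)
      (fun x => hcompl x) hsm
    rw [← congrFun huniq ⟨(i:ℕ)-s, by have := i.2; omega⟩]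
    exact congrArg w (Fin.ext (by simp; omega))
end Main
lemma sum_Icc_one {M : Type*} [AddCommMonoid M] (s : ℕ) (F : ℕ → M) :
    ∑ k ∈ Finset.Icc 1 s, F k = ∑ k : Fin s, F ((k:ℕ)+1) := by
  rw [← Finset.Ico_add_one_right_eq_Icc, Finset.sum_Ico_eq_sum_range,
    Fin.sum_univ_eq_sum_range (fun i => F (i+1))]
  exact Finset.sum_congr (by norm_num) fun i _ => by rw [Nat.add_comm 1 i]

lemma prod_Icc_one {M : Type*} [CommMonoid M] (s : ℕ) (F : ℕ → M) :
    ∏ k ∈ Finset.Icc 1 s, F k = ∏ k : Fin s, F ((k:ℕ)+1) := by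
  rw [← Finset.Ico_add_one_right_eq_Icc, Finset.prod_Ico_eq_prod_range,
    Fin.prod_univ_eq_prod_range (fun i => F (i+1))]
  exact Finset.prod_congr (by norm_num) fun i _ => by rw [Nat.add_comm 1 i]

lemma lhs_eq_TS (n s : ℕ) (hs : 1 ≤ s) (hsn : s < n) :
    (∑ w ∈ Finset.univ.filter (fun w : Equiv.Perm (Fin n) =>
        ∀ a b : Fin n, (a : ℕ) < (b : ℕ) → (((b : ℕ) < s) ∨ (s ≤ (a : ℕ))) → w a < w b),
      (zz : R2) ^ (∑ k ∈ Finset.Icc 1 s, epsG n s w k) *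
        ∏ k ∈ Finset.Icc 1 s, (dinv (epsG n s w k + k - 1) * dinv (epsG n s w k + k))) =
    TS s (n-s) 0 := by
  rw [TS]
  apply Finset.sum_nbij'
    (i := fun w : Equiv.Perm (Fin n) => fun k : Fin s => epsG n s w ((k:ℕ)+1))
    (j := fun f : Fin s → ℕ => if hf2 : (∀ i j : Fin s, i ≤ j → f j ≤ f i)
      then wperm n s hsn f hf2 else 1)
  · intro w hwmem
    rw [Finset.mem_filter] at hwmem
    have hw := hwmem.2
    rw [mem_AT]
    exact ⟨fun k => Fw_le hsn hw k, fun i j hij => Fw_anti hsn hw i j hij⟩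
  · intro f hf
    rw [mem_AT] at hf
    rw [dif_pos hf.2, Finset.mem_filter]
    exact ⟨Finset.mem_univ _, wperm_shuffle hsn f hf.2⟩
  · intro w hwmem
    rw [Finset.mem_filter] at hwmem
    have hw := hwmem.2
    rw [dif_pos (fun i j hij => Fw_anti hsn hw i j hij)]
    exact wperm_Fw hsn hw
  · intro f hf
    rw [mem_AT] at hf
    rw [dif_pos hf.2]
    funext k
    exact epsG_wperm hsn f hf.1 hf.2 k
  · intro w hwmem
    rw [sum_Icc_one s (fun k => epsG n s w k),
      prod_Icc_one s (fun k => dinv (epsG n s w k + k - 1) * dinv (epsG n s w k + k))]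
    rfl

theorem stmt8' (n s : ℕ) (hs : 1 ≤ s) (hsn : s < n) :
    (∑ w ∈ Finset.univ.filter (fun w : Equiv.Perm (Fin n) =>
        ∀ a b : Fin n, (a : ℕ) < (b : ℕ) → (((b : ℕ) < s) ∨ (s ≤ (a : ℕ))) → w a < w b),
      (zz : R2) ^ (∑ k ∈ Finset.Icc 1 s, epsG n s w k) *
        ∏ k ∈ Finset.Icc 1 s, (dinv (epsG n s w k + k - 1) * dinv (epsG n s w k + k))) =
    Uprod n * Vprod s * Vprod (n - s) *
      ∏ i ∈ Finset.Icc 1 s, (dinv (i - 1) * dinv (n - i + 1)) := by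
  rw [lhs_eq_TS n s hs hsn, TS_eq_G, G_closed s (n-s) 0, show s+(n-s) = n by omega]
  have hA : (∏ i ∈ Finset.Icc 1 s, dinv (i-1)) = ∏ i ∈ Finset.range s, dinv (0+i) := by
    rw [← Finset.Ico_add_one_right_eq_Icc, Finset.prod_Ico_eq_prod_range]
    exact Finset.prod_congr (by norm_num) fun i _ => congrArg dinv (by omega)
  have hB : (∏ i ∈ Finset.Icc 1 s, dinv (n-i+1)) = ∏ i ∈ Finset.range s, dinv (0+(n-s)+1+i) := by
    rw [← Finset.prod_range_reflect (fun i => dinv (0+(n-s)+1+i)) s,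
      ← Finset.Ico_add_one_right_eq_Icc, Finset.prod_Ico_eq_prod_range]
    refine Finset.prod_congr (by norm_num) fun i hi => ?_
    rw [Finset.mem_range] at hi
    exact congrArg dinv (by omega)
  rw [Finset.prod_mul_distrib, hA, hB, qb]
  ring


/-- The `l = 1` (Grassmannian) case of the combinatorial identity, summing over
Grassmannian shuffles (permutations increasing on `{1,...,s}` and `{s+1,...,n}`).
Here `t = X 0` and `z = X 1`, formal power series over `ℚ`. -/
theorem stmt8 (n s : ℕ) (hs : 1 ≤ s) (hsn : s < n) :
    (∑ w ∈ Finset.univ.filter (fun w : Equiv.Perm (Fin n) =>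
        ∀ a b : Fin n, (a : ℕ) < (b : ℕ) →
          (((b : ℕ) < s) ∨ (s ≤ (a : ℕ))) → w a < w b),
      (MvPowerSeries.X 1 : MvPowerSeries (Fin 2) ℚ) ^ (∑ k ∈ Finset.Icc 1 s, epsG n s w k) *
        ∏ k ∈ Finset.Icc 1 s,
          ((1 - MvPowerSeries.X 0 * MvPowerSeries.X 1 ^ (epsG n s w k + k - 1))⁻¹ *
           (1 - MvPowerSeries.X 0 * MvPowerSeries.X 1 ^ (epsG n s w k + k))⁻¹)) =
    (∏ i ∈ Finset.Icc 1 n, (1 - (MvPowerSeries.X 1 : MvPowerSeries (Fin 2) ℚ) ^ i)) *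
      (∏ i ∈ Finset.Icc 1 s, (1 - (MvPowerSeries.X 1 : MvPowerSeries (Fin 2) ℚ) ^ i)⁻¹) *
      (∏ i ∈ Finset.Icc 1 (n - s), (1 - (MvPowerSeries.X 1 : MvPowerSeries (Fin 2) ℚ) ^ i)⁻¹) *
      ∏ i ∈ Finset.Icc 1 s,
        ((1 - MvPowerSeries.X 0 * (MvPowerSeries.X 1 : MvPowerSeries (Fin 2) ℚ) ^ (i - 1))⁻¹ *
         (1 - MvPowerSeries.X 0 * (MvPowerSeries.X 1 : MvPowerSeries (Fin 2) ℚ) ^ (n - i + 1))⁻¹) := by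
  have h := stmt8' n s hs hsn
  simp only [dinv, dd, uinv, uu, tt, zz, Uprod, Vprod] at h
  exact h
end
end

section
/- For the complete flag case (l = n-1, s_i = i), the identity of Lemma pfpoly reads: (1 - z^n) ∏_{1≤i≤j≤n-1} (x_{i-1} - x_j z^{j-i+1}) = Σ_{m=1}^{n} z^{n-m}(1-z) ∏_{i≤m-1}(x_{i-1} - x_{m-1} z^{m-i+1}) ∏_{m≤j≤n-1}(x_{m-1} - x_j z^{j-m}) ∏_{i≤j, i≠m, j≠m-1}(x_{i-1} - x_j z^{j-i+1}) in C[x_0,...,x_{n-1},z]. -/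
open Polynomial

/-- `e^{i,j}_k = x_i - x_j z^k` in `ℂ[x_0, x_1, ...][z]`. -/
noncomputable def ee (i j k : ℕ) : Polynomial (MvPolynomial ℕ ℂ) :=
  Polynomial.C (MvPolynomial.X i) - Polynomial.C (MvPolynomial.X j) * Polynomial.X ^ k

namespace Pf
open Finset

variable {F : Type*} [CommRing F] {K : Type*} [Field K]

def pairsLt (s : Finset ℕ) : Finset (ℕ × ℕ) := (s ×ˢ s).filter fun p => p.1 < p.2

variable {F : Type*} [CommRing F]

lemma pairsLt_decomp (s : Finset ℕ) (i : ℕ) (hi : i ∈ s) :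
    pairsLt s = pairsLt (s.erase i) ∪
      ((s.filter (· < i)).image (fun j => (j, i)) ∪ (s.filter (i < ·)).image (fun j => (i, j))) := by
  ext p
  simp only [pairsLt, Finset.mem_union, Finset.mem_filter, Finset.mem_product, Finset.mem_image,
    Finset.mem_erase]
  constructor
  · rintro ⟨⟨h1, h2⟩, hlt⟩
    rcases eq_or_ne p.1 i with rfl | hne1
    · exact Or.inr (Or.inr ⟨p.2, ⟨h2, hlt⟩, by simp⟩)
    rcases eq_or_ne p.2 i with rfl | hne2
    · exact Or.inr (Or.inl ⟨p.1, ⟨h1, hlt⟩, by simp⟩)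
    · exact Or.inl ⟨⟨⟨hne1, h1⟩, ⟨hne2, h2⟩⟩, hlt⟩
  · rintro (⟨⟨⟨_, h1⟩, ⟨_, h2⟩⟩, hlt⟩ | ⟨j, ⟨hj, hlt⟩, rfl⟩ | ⟨j, ⟨hj, hlt⟩, rfl⟩)
    · exact ⟨⟨h1, h2⟩, hlt⟩
    · exact ⟨⟨hj, hi⟩, hlt⟩
    · exact ⟨⟨hi, hj⟩, hlt⟩

lemma vsplit (u : ℕ → F) (s : Finset ℕ) (i : ℕ) (hi : i ∈ s) :
    ∏ p ∈ pairsLt s, (u p.1 - u p.2) =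
      (-1) ^ ((s.filter (· < i)).card) * (∏ j ∈ s.erase i, (u i - u j)) *
        ∏ p ∈ pairsLt (s.erase i), (u p.1 - u p.2) := by
  have hd1 : Disjoint ((s.filter (· < i)).image (fun j => (j, i)))
      ((s.filter (i < ·)).image (fun j => (i, j))) := by
    simp only [Finset.disjoint_left, Finset.mem_image, Finset.mem_filter]
    rintro p ⟨j, ⟨_, hj⟩, rfl⟩ ⟨k, ⟨_, hk⟩, he⟩
    have : j = i := (Prod.mk.injEq _ _ _ _).mp he.symm |>.1
    omega
  have hd2 : Disjoint (pairsLt (s.erase i))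
      (((s.filter (· < i)).image (fun j => (j, i)) ∪ (s.filter (i < ·)).image (fun j => (i, j)))) := by
    simp only [Finset.disjoint_left, Finset.mem_union, Finset.mem_image, Finset.mem_filter,
      pairsLt, Finset.mem_product, Finset.mem_erase]
    rintro p ⟨⟨⟨h1, _⟩, ⟨h2, _⟩⟩, _⟩ (⟨j, _, rfl⟩ | ⟨j, _, rfl⟩)
    · exact h2 rfl
    · exact h1 rfl
  rw [pairsLt_decomp s i hi, Finset.prod_union hd2, Finset.prod_union hd1,
    Finset.prod_image (by intro a _ b _ h; exact (Prod.mk.injEq _ _ _ _).mp h |>.1),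
    Finset.prod_image (by intro a _ b _ h; exact (Prod.mk.injEq _ _ _ _).mp h |>.2)]
  have he : s.erase i = (s.filter (· < i)) ∪ (s.filter (i < ·)) := by
    ext j
    simp only [Finset.mem_erase, Finset.mem_union, Finset.mem_filter]
    constructor
    · rintro ⟨h1, h2⟩; rcases lt_or_gt_of_ne h1 with h | h
      · exact Or.inl ⟨h2, h⟩
      · exact Or.inr ⟨h2, h⟩
    · rintro (⟨h1, h2⟩ | ⟨h1, h2⟩) <;> exact ⟨by omega, h1⟩
  have hdf : Disjoint (s.filter (· < i)) (s.filter (i < ·)) := by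
    simp only [Finset.disjoint_left, Finset.mem_filter]; rintro a ⟨_, h⟩ ⟨_, h'⟩; omega
  rw [he, Finset.prod_union hdf]
  have : ∏ j ∈ s.filter (· < i), (u j - u i) =
      (-1) ^ ((s.filter (· < i)).card) * ∏ j ∈ s.filter (· < i), (u i - u j) := by
    rw [← Finset.prod_const, ← Finset.prod_mul_distrib]
    exact Finset.prod_congr rfl fun j _ => by ring
  rw [this]; ring


lemma coeff_basis (n : ℕ) (v : ℕ → K) (i : ℕ) (hi : i ∈ Finset.range (n+1)) :
    (Lagrange.basis (Finset.range (n+1)) v i).coeff n =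
      ∏ j ∈ (Finset.range (n+1)).erase i, (v i - v j)⁻¹ := by
  have hcard : ((Finset.range (n+1)).erase i).card = n := by
    rw [Finset.card_erase_of_mem hi, Finset.card_range]; omega
  have h := Polynomial.coeff_prod_of_natDegree_le ((Finset.range (n+1)).erase i)
    (fun j => Lagrange.basisDivisor (v i) (v j)) 1 ?_
  · rw [Lagrange.basis]
    rw [hcard, mul_one] at h
    rw [h]
    apply Finset.prod_congr rfl
    intro j _
    rw [Lagrange.basisDivisor]
    simp [Polynomial.coeff_C_mul]
  · intro j _
    show (Lagrange.basisDivisor (v i) (v j)).natDegree ≤ 1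
    rcases eq_or_ne (v i) (v j) with h | h
    · rw [Lagrange.basisDivisor_eq_zero_iff.mpr h]; simp
    · rw [Lagrange.natDegree_basisDivisor_of_ne h]

lemma KRI (n : ℕ) (w : ℕ → K) (z : K) (hz : z ≠ 0)
    (v : ℕ → K) (hinj : Set.InjOn v (Finset.range (n+1))) :
    (-z)^n = ∑ i ∈ Finset.range (n+1),
      (∏ k ∈ Finset.Icc 1 n, (w k - z * v i)) *
        ∏ j ∈ (Finset.range (n+1)).erase i, (v i - v j)⁻¹ := by
  set P : K[X] := ∏ k ∈ Finset.Icc 1 n, (X - C (w k * z⁻¹)) with hP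
  have hPm : P.Monic := monic_prod_of_monic _ _ fun k _ => monic_X_sub_C _
  have hcard : (Finset.Icc 1 n).card = n := by rw [Nat.card_Icc]; omega
  have hPdeg : P.natDegree = n := by
    rw [hP, Polynomial.natDegree_prod_of_monic _ _ fun k _ => monic_X_sub_C _,
      Finset.sum_congr rfl fun k _ => Polynomial.natDegree_X_sub_C _]
    simp [hcard]
  set Q : K[X] := C ((-z)^n) * P with hQ
  have hdeg : Q.degree < ((Finset.range (n+1)).card : ℕ) := by
    rw [Finset.card_range]
    calc Q.degree ≤ (C ((-z)^n)).degree + P.degree := Polynomial.degree_mul_le _ _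
    _ ≤ 0 + P.degree := by gcongr; exact Polynomial.degree_C_le
    _ = P.degree := by rw [zero_add]
    _ ≤ (n : WithBot ℕ) := Polynomial.degree_le_natDegree.trans (by rw [hPdeg])
    _ < ((n+1 : ℕ) : WithBot ℕ) := by exact_mod_cast WithBot.coe_lt_coe.mpr (Nat.lt_succ_self n)
  have heval : ∀ t : K, Q.eval t = ∏ k ∈ Finset.Icc 1 n, (w k - z * t) := by
    intro t
    rw [hQ, Polynomial.eval_mul, Polynomial.eval_C, hP, Polynomial.eval_prod]
    rw [show ((-z)^n : K) = ∏ _k ∈ Finset.Icc 1 n, (-z) by rw [Finset.prod_const, hcard]]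
    rw [← Finset.prod_mul_distrib]
    apply Finset.prod_congr rfl
    intro k _
    simp only [Polynomial.eval_sub, Polynomial.eval_X, Polynomial.eval_C]
    field_simp
    ring
  have hinterp := Lagrange.eq_interpolate hinj hdeg
  have hc := congrArg (fun p : K[X] => p.coeff n) hinterp
  have hlhs : Q.coeff n = (-z)^n := by
    rw [hQ, Polynomial.coeff_C_mul, ← hPdeg, hPm.coeff_natDegree, mul_one]
  rw [hlhs] at hc
  rw [hc, Lagrange.interpolate_apply, Polynomial.finset_sum_coeff]
  apply Finset.sum_congr rfl
  intro i hi
  rw [Polynomial.coeff_C_mul, coeff_basis n v i hi, heval]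


lemma mem_pairsSet {l : ℕ} {p : ℕ × ℕ} :
    p ∈ pairsSet l ↔ (1 ≤ p.1 ∧ p.1 ≤ l) ∧ (1 ≤ p.2 ∧ p.2 ≤ l) ∧ p.1 ≤ p.2 := by
  simp [pairsSet, Finset.mem_filter, Finset.mem_product, Finset.mem_Icc, and_assoc]

lemma mem_pairsLt' {s : Finset ℕ} {p : ℕ × ℕ} :
    p ∈ pairsLt s ↔ p.1 ∈ s ∧ p.2 ∈ s ∧ p.1 < p.2 := by
  simp [pairsLt, and_assoc]

lemma himg1 (n : ℕ) (hn : 1 ≤ n) :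
    (pairsSet (n-1)).image (fun p => (p.1, p.2+1)) = pairsLt (Finset.Icc 1 n) := by
  ext ⟨q1, q2⟩
  simp only [Finset.mem_image, mem_pairsLt', Finset.mem_Icc]
  constructor
  · rintro ⟨⟨p1, p2⟩, hp, heq⟩
    rw [mem_pairsSet] at hp
    simp only [Prod.mk.injEq] at heq
    omega
  · rintro ⟨⟨h1, h2⟩, ⟨h3, h4⟩, h5⟩
    refine ⟨(q1, q2 - 1), ?_, ?_⟩
    · rw [mem_pairsSet]; omega
    · simp only [Prod.mk.injEq, true_and, and_true]; omega

lemma himg2 (n m : ℕ) (hn : 1 ≤ n) (hm : 1 ≤ m) :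
    ((pairsSet (n-1)).filter (fun p => p.1 ≠ m ∧ p.2 ≠ m-1)).image (fun p => (p.1, p.2+1)) =
      (pairsLt (Finset.Icc 1 n)).filter (fun p => p.1 ≠ m ∧ p.2 ≠ m) := by
  ext ⟨q1, q2⟩
  simp only [Finset.mem_image, Finset.mem_filter, mem_pairsLt', Finset.mem_Icc]
  constructor
  · rintro ⟨⟨p1, p2⟩, ⟨hp, hne⟩, heq⟩
    rw [mem_pairsSet] at hp
    simp only [Prod.mk.injEq] at heq
    have hne' : p1 ≠ m ∧ p2 ≠ m - 1 := hne
    omega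
  · rintro ⟨⟨⟨h1, h2⟩, ⟨h3, h4⟩, h5⟩, hne1, hne2⟩
    refine ⟨(q1, q2 - 1), ⟨?_, hne1, by omega⟩, ?_⟩
    · rw [mem_pairsSet]; omega
    · simp only [Prod.mk.injEq, true_and, and_true]; omega

lemma hfe (n m : ℕ) :
    (pairsLt (Finset.Icc 1 n)).filter (fun p => p.1 ≠ m ∧ p.2 ≠ m) =
      pairsLt ((Finset.Icc 1 n).erase m) := by
  ext ⟨q1, q2⟩
  simp only [Finset.mem_filter, mem_pairsLt', Finset.mem_Icc, Finset.mem_erase]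
  omega

lemma hs1 (n m : ℕ) (hm : 1 ≤ m) :
    ∑ p ∈ (pairsSet (n-1)).filter (fun p => p.1 = m), p.1 = m * (n - m) := by
  have himg : (pairsSet (n-1)).filter (fun p => p.1 = m) =
      (Finset.Icc m (n-1)).image (fun j => (m, j)) := by
    ext ⟨q1, q2⟩
    simp only [Finset.mem_filter, Finset.mem_image, Finset.mem_Icc, mem_pairsSet]
    constructor
    · rintro ⟨⟨⟨h1, h2⟩, ⟨h3, h4⟩, h5⟩, heq⟩
      have heq' : q1 = m := heq
      exact ⟨q2, ⟨by omega, by omega⟩, by simp only [Prod.mk.injEq, true_and, and_true]; omega⟩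
    · rintro ⟨j, ⟨hj1, hj2⟩, heq⟩
      simp only [Prod.mk.injEq] at heq
      refine ⟨?_, by omega⟩
      omega
  rw [himg, Finset.sum_image (by intro a _ b _ h; simpa using h)]
  rw [Finset.sum_const, Nat.card_Icc, smul_eq_mul]
  have h : n - 1 + 1 - m = n - m := by omega
  rw [h, Nat.mul_comm]

lemma hs2 (n m : ℕ) (hn : 1 ≤ n) (hm : m ≤ n) :
    ∑ p ∈ ((pairsSet (n-1)).filter (fun p => ¬p.1 = m)).filter (fun p => p.2 = m-1), p.1 =
      ∑ i ∈ Finset.Icc 1 (m-1), i := by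
  have himg : ((pairsSet (n-1)).filter (fun p => ¬p.1 = m)).filter (fun p => p.2 = m-1) =
      (Finset.Icc 1 (m-1)).image (fun i => (i, m-1)) := by
    ext ⟨q1, q2⟩
    simp only [Finset.mem_filter, Finset.mem_image, Finset.mem_Icc, mem_pairsSet]
    constructor
    · rintro ⟨⟨⟨⟨h1, h2⟩, ⟨h3, h4⟩, h5⟩, h6⟩, heq⟩
      have h6' : ¬ q1 = m := h6
      have heq' : q2 = m - 1 := heq
      exact ⟨q1, ⟨h1, by omega⟩, by simp only [Prod.mk.injEq, true_and, and_true]; omega⟩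
    · rintro ⟨i, ⟨hi1, hi2⟩, heq⟩
      simp only [Prod.mk.injEq] at heq
      refine ⟨⟨?_, by omega⟩, by omega⟩
      omega
  rw [himg, Finset.sum_image (by intro a _ b _ h; simpa using h)]

lemma hNat (n m : ℕ) (hn : 1 ≤ n) (hm1 : 1 ≤ m) (hm2 : m ≤ n) :
    (n - m) + ∑ p ∈ pairsSet (n-1), p.1 =
      (∑ i ∈ Finset.Icc 1 (m-1), i) + (m+1)*(n-m) +
        ∑ p ∈ (pairsSet (n-1)).filter (fun p => p.1 ≠ m ∧ p.2 ≠ m-1), p.1 := by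
  have hsp1 := Finset.sum_filter_add_sum_filter_not (pairsSet (n-1)) (fun p => p.1 = m)
    (fun p => p.1)
  have hsp2 := Finset.sum_filter_add_sum_filter_not
    ((pairsSet (n-1)).filter (fun p => ¬p.1 = m)) (fun p => p.2 = m-1) (fun p => p.1)
  have hpred : ((pairsSet (n-1)).filter (fun p => ¬p.1 = m)).filter (fun p => ¬p.2 = m-1) =
      (pairsSet (n-1)).filter (fun p => p.1 ≠ m ∧ p.2 ≠ m-1) := by
    rw [Finset.filter_filter]
  rw [hpred] at hsp2
  rw [← hsp1, ← hsp2, hs1 n m hm1, hs2 n m hn hm2]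
  ring

lemma star (n : ℕ) (hn : 1 ≤ n) (w : ℕ → K) (z : K) (hz : z ≠ 0)
    (hw : ∀ i ∈ Finset.Icc 1 n, w i ≠ 0)
    (hd : ∀ i ∈ Finset.Icc 1 n, ∀ j ∈ Finset.Icc 1 n, i ≠ j → w i ≠ w j) :
    (1 - z^n) * ∏ p ∈ pairsLt (Finset.Icc 1 n), (w p.1 - w p.2) =
    ∑ m ∈ Finset.Icc 1 n, (1-z) * (∏ i ∈ Finset.Icc 1 (m-1), (w i - z * w m)) *
      (∏ j ∈ Finset.Icc (m+1) n, (z * w m - w j)) *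
      (∏ p ∈ pairsLt ((Finset.Icc 1 n).erase m), (w p.1 - w p.2)) := by
  classical
  set v : ℕ → K := fun i => if i = 0 then 0 else w i with hv
  have hv0 : v 0 = 0 := by simp [hv]
  have hvw : ∀ i, 1 ≤ i → v i = w i := by
    intro i hi; show (if i = 0 then (0:K) else w i) = w i; rw [if_neg (by omega)]
  have hmem : ∀ i, i ∈ Finset.range (n+1) → 1 ≤ i → i ∈ Finset.Icc 1 n := by
    intro i h1 h2; rw [Finset.mem_range] at h1; rw [Finset.mem_Icc]; omega
  have herase0 : (Finset.range (n+1)).erase 0 = Finset.Icc 1 n := by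
    ext j; simp only [Finset.mem_erase, Finset.mem_range, Finset.mem_Icc]; omega
  have hinj : Set.InjOn v (Finset.range (n+1)) := by
    intro i hi j hj hij
    simp only [Finset.coe_range, Set.mem_Iio] at hi hj
    rcases Nat.eq_zero_or_pos i with rfl | hi1
    · rcases Nat.eq_zero_or_pos j with rfl | hj1
      · rfl
      · rw [hv0, hvw j hj1] at hij
        exact absurd hij.symm (hw j (by rw [Finset.mem_Icc]; omega))
    · rcases Nat.eq_zero_or_pos j with rfl | hj1
      · rw [hv0, hvw i hi1] at hij
        exact absurd hij (hw i (by rw [Finset.mem_Icc]; omega))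
      · by_contra hne
        rw [hvw i hi1, hvw j hj1] at hij
        exact hd i (by rw [Finset.mem_Icc]; omega) j (by rw [Finset.mem_Icc]; omega) hne hij
  have hvne : ∀ i ∈ Finset.range (n+1), ∀ j ∈ (Finset.range (n+1)).erase i, v i - v j ≠ 0 := by
    intro i hi j hj
    rw [Finset.mem_erase] at hj
    rw [sub_ne_zero]
    intro h
    exact hj.1.symm (hinj (by simpa using hi) (by simpa using hj.2) h)
  -- step (E): multiply KRI by V
  set V := ∏ p ∈ pairsLt (Finset.range (n+1)), (v p.1 - v p.2) with hV
  have hE : (-z)^n * V = ∑ i ∈ Finset.range (n+1),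
      (-1:K)^i * (∏ k ∈ Finset.Icc 1 n, (w k - z * v i)) *
        ∏ p ∈ pairsLt ((Finset.range (n+1)).erase i), (v p.1 - v p.2) := by
    rw [KRI n w z hz v hinj, Finset.sum_mul]
    apply Finset.sum_congr rfl
    intro i hi
    have hsplit := vsplit v (Finset.range (n+1)) i (by simpa using hi)
    have hfc : ((Finset.range (n+1)).filter (· < i)).card = i := by
      rw [Finset.mem_range] at hi
      rw [show (Finset.range (n+1)).filter (· < i) = Finset.range i by
        ext j; simp only [Finset.mem_filter, Finset.mem_range]; omega, Finset.card_range]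
    rw [← hV] at hsplit
    have hprod : (∏ j ∈ (Finset.range (n+1)).erase i, (v i - v j)) *
        (∏ j ∈ (Finset.range (n+1)).erase i, (v i - v j)⁻¹) = 1 := by
      rw [← Finset.prod_mul_distrib,
        Finset.prod_congr rfl fun j hj => mul_inv_cancel₀ (hvne i hi j hj),
        Finset.prod_const_one]
    calc (∏ k ∈ Finset.Icc 1 n, (w k - z * v i)) *
          (∏ j ∈ (Finset.range (n+1)).erase i, (v i - v j)⁻¹) * V
        = (-1:K)^i * (∏ k ∈ Finset.Icc 1 n, (w k - z * v i)) *
          (((∏ j ∈ (Finset.range (n+1)).erase i, (v i - v j)) *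
            (∏ j ∈ (Finset.range (n+1)).erase i, (v i - v j)⁻¹)) *
          ∏ p ∈ pairsLt ((Finset.range (n+1)).erase i), (v p.1 - v p.2)) := by
          rw [hsplit, hfc]; ring
      _ = _ := by rw [hprod, one_mul]
  have mem_pairsLt : ∀ (s : Finset ℕ) (p : ℕ × ℕ), p ∈ pairsLt s ↔ p.1 ∈ s ∧ p.2 ∈ s ∧ p.1 < p.2 := by
    intro s p; simp [pairsLt, and_assoc]
  have hWv : ∀ s : Finset ℕ, s ⊆ Finset.Icc 1 n →
      ∏ p ∈ pairsLt s, (v p.1 - v p.2) = ∏ p ∈ pairsLt s, (w p.1 - w p.2) := by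
    intro s hs
    apply Finset.prod_congr rfl
    intro p hp
    rw [mem_pairsLt] at hp
    rw [hvw p.1 (Finset.mem_Icc.mp (hs hp.1)).1, hvw p.2 (Finset.mem_Icc.mp (hs hp.2.1)).1]
  set W := ∏ p ∈ pairsLt (Finset.Icc 1 n), (w p.1 - w p.2) with hW
  set Pi := ∏ j ∈ Finset.Icc 1 n, w j with hPi
  have hPine : Pi ≠ 0 := Finset.prod_ne_zero_iff.mpr hw
  -- split node 0 out of hE
  have h0mem : (0:ℕ) ∈ Finset.range (n+1) := by simp
  rw [← Finset.add_sum_erase _ _ h0mem, herase0] at hE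
  -- the V on the left
  have hVeq : V = (-1:K)^n * Pi * W := by
    have h := vsplit v (Finset.range (n+1)) 0 h0mem
    rw [← hV, herase0] at h
    have hfc : ((Finset.range (n+1)).filter (· < 0)).card = 0 := by
      simp [Finset.filter_eq_empty_iff]
    have hm : ∏ j ∈ Finset.Icc 1 n, (v 0 - v j) = (-1:K)^n * Pi := by
      have hm1 : ∏ j ∈ Finset.Icc 1 n, (v 0 - v j) = ∏ j ∈ Finset.Icc 1 n, ((-1) * w j) :=
        Finset.prod_congr rfl fun j hj => by
          rw [hv0, hvw j (Finset.mem_Icc.mp hj).1]; ring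
      rw [hm1, Finset.prod_mul_distrib, Finset.prod_const, Nat.card_Icc, hPi]
      norm_num
    rw [h, hfc, pow_zero, one_mul, hWv _ (Finset.Subset.refl _), ← hW, hm]
  have hterm : ∀ m ∈ Finset.Icc 1 n,
      ((-1:K)^m * ∏ k ∈ Finset.Icc 1 n, (w k - z * v m)) *
        ∏ p ∈ pairsLt ((Finset.range (n+1)).erase m), (v p.1 - v p.2) =
      -(Pi * ((1-z) * (∏ i ∈ Finset.Icc 1 (m-1), (w i - z * w m)) *
        (∏ j ∈ Finset.Icc (m+1) n, (z * w m - w j)) *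
        (∏ p ∈ pairsLt ((Finset.Icc 1 n).erase m), (w p.1 - w p.2)))) := by
    intro m hmm
    have hm' := Finset.mem_Icc.mp hmm
    have h0m : (0:ℕ) ∈ (Finset.range (n+1)).erase m := by
      rw [Finset.mem_erase]; exact ⟨by omega, by simp⟩
    have hee : ((Finset.range (n+1)).erase m).erase 0 = (Finset.Icc 1 n).erase m := by
      ext j; simp only [Finset.mem_erase, Finset.mem_range, Finset.mem_Icc]; omega
    have hsub : (Finset.Icc 1 n).erase m ⊆ Finset.Icc 1 n := Finset.erase_subset _ _
    have hcarde : ((Finset.Icc 1 n).erase m).card = n - 1 := by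
      rw [Finset.card_erase_of_mem hmm, Nat.card_Icc]; omega
    have hsplit := vsplit v ((Finset.range (n+1)).erase m) 0 h0m
    have hfc : ((((Finset.range (n+1)).erase m)).filter (· < 0)).card = 0 := by
      simp [Finset.filter_eq_empty_iff]
    rw [hfc, pow_zero, one_mul, hee] at hsplit
    have hm2 : ∏ j ∈ (Finset.Icc 1 n).erase m, (v 0 - v j) =
        (-1:K)^(n-1) * ∏ j ∈ (Finset.Icc 1 n).erase m, w j := by
      have hm1 : ∏ j ∈ (Finset.Icc 1 n).erase m, (v 0 - v j) =
          ∏ j ∈ (Finset.Icc 1 n).erase m, ((-1) * w j) :=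
        Finset.prod_congr rfl fun j hj => by
          rw [hv0, hvw j (Finset.mem_Icc.mp (hsub hj)).1]; ring
      rw [hm1, Finset.prod_mul_distrib, Finset.prod_const, hcarde]
    have hk1 : ∏ k ∈ Finset.Icc 1 n, (w k - z * v m) =
        (w m - z * w m) * ∏ k ∈ (Finset.Icc 1 n).erase m, (w k - z * w m) := by
      rw [hvw m hm'.1, ← Finset.mul_prod_erase _ _ hmm]
    have hicc : (Finset.Icc 1 n).erase m = Finset.Icc 1 (m-1) ∪ Finset.Icc (m+1) n := by
      ext j; simp only [Finset.mem_erase, Finset.mem_union, Finset.mem_Icc]; omega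
    have hdisj : Disjoint (Finset.Icc 1 (m-1)) (Finset.Icc (m+1) n) := by
      rw [Finset.disjoint_left]; intro a h1 h2
      rw [Finset.mem_Icc] at h1 h2; omega
    have hk2 : ∏ k ∈ (Finset.Icc 1 n).erase m, (w k - z * w m) =
        (∏ i ∈ Finset.Icc 1 (m-1), (w i - z * w m)) *
          ((-1:K)^(n-m) * ∏ j ∈ Finset.Icc (m+1) n, (z * w m - w j)) := by
      rw [hicc, Finset.prod_union hdisj]
      congr 1
      have h3 : ∏ j ∈ Finset.Icc (m+1) n, (w j - z * w m) =
          ∏ j ∈ Finset.Icc (m+1) n, ((-1) * (z * w m - w j)) :=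
        Finset.prod_congr rfl fun j hj => by ring
      rw [h3, Finset.prod_mul_distrib, Finset.prod_const, Nat.card_Icc]
      congr 2
      omega
    have hwm : w m * ∏ j ∈ (Finset.Icc 1 n).erase m, w j = Pi :=
      Finset.mul_prod_erase _ _ hmm
    have hsign : (-1:K)^m * (-1:K)^(n-m) * (-1:K)^(n-1) = -1 := by
      rw [← pow_add, ← pow_add, show m + (n - m) + (n - 1) = 2*n - 1 by omega]
      exact Odd.neg_one_pow ⟨n-1, by omega⟩
    rw [hsplit, hWv _ hsub, hk1, hk2, hm2]
    calc ((-1:K)^m * ((w m - z * w m) * ((∏ i ∈ Finset.Icc 1 (m-1), (w i - z * w m)) *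
          ((-1:K)^(n-m) * ∏ j ∈ Finset.Icc (m+1) n, (z * w m - w j))))) *
          (((-1:K)^(n-1) * ∏ j ∈ (Finset.Icc 1 n).erase m, w j) *
            ∏ p ∈ pairsLt ((Finset.Icc 1 n).erase m), (w p.1 - w p.2))
        = ((-1:K)^m * (-1:K)^(n-m) * (-1:K)^(n-1)) *
          ((w m * ∏ j ∈ (Finset.Icc 1 n).erase m, w j) *
          ((1-z) * (∏ i ∈ Finset.Icc 1 (m-1), (w i - z * w m)) *
            (∏ j ∈ Finset.Icc (m+1) n, (z * w m - w j)) *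
            (∏ p ∈ pairsLt ((Finset.Icc 1 n).erase m), (w p.1 - w p.2)))) := by ring
      _ = _ := by rw [hsign, hwm]; ring
  rw [hVeq, Finset.sum_congr rfl hterm] at hE
  have h00 : ((-1:K)^0 * ∏ k ∈ Finset.Icc 1 n, (w k - z * v 0)) *
      ∏ p ∈ pairsLt (Finset.Icc 1 n), (v p.1 - v p.2) = Pi * W := by
    rw [pow_zero, one_mul, hWv _ (Finset.Subset.refl _), ← hW]
    congr 1
    rw [hPi]
    exact Finset.prod_congr rfl fun k _ => by rw [hv0]; ring
  rw [h00] at hE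
  have hsum : ∑ m ∈ Finset.Icc 1 n, -(Pi * ((1-z) * (∏ i ∈ Finset.Icc 1 (m-1), (w i - z * w m)) *
        (∏ j ∈ Finset.Icc (m+1) n, (z * w m - w j)) *
        (∏ p ∈ pairsLt ((Finset.Icc 1 n).erase m), (w p.1 - w p.2)))) =
      -(Pi * ∑ m ∈ Finset.Icc 1 n, ((1-z) * (∏ i ∈ Finset.Icc 1 (m-1), (w i - z * w m)) *
        (∏ j ∈ Finset.Icc (m+1) n, (z * w m - w j)) *
        (∏ p ∈ pairsLt ((Finset.Icc 1 n).erase m), (w p.1 - w p.2)))) := by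
    rw [Finset.mul_sum, ← Finset.sum_neg_distrib]
  rw [hsum] at hE
  rw [show (-z)^n * ((-1:K)^n * Pi * W) = ((-z) * (-1:K))^n * (Pi * W) by
    rw [mul_pow]; ring, show ((-z) * (-1:K)) = z by ring] at hE
  apply mul_left_cancel₀ hPine
  linear_combination -hE


end Pf

set_option synthInstance.maxHeartbeats 1000000 in
set_option maxHeartbeats 1000000 in
/-- Lemma pfpoly for complete flags (`l = n-1`, `s i = i`):
`(1-z^n) ∏_{1≤i≤j≤n-1} (x_{i-1} - x_j z^{j-i+1}) = Σ_{m=1}^{n} z^{n-m}(1-z)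
∏_{i≤m-1}(x_{i-1} - x_{m-1} z^{m-i+1}) ∏_{m≤j≤n-1}(x_{m-1} - x_j z^{j-m})
∏_{i≤j, i≠m, j≠m-1}(x_{i-1} - x_j z^{j-i+1})`. -/
theorem stmt12 (n : ℕ) (hn : 1 ≤ n) :
    (1 - (Polynomial.X : Polynomial (MvPolynomial ℕ ℂ)) ^ n) *
      ∏ p ∈ pairsSet (n - 1), ee (p.1 - 1) p.2 (p.2 - p.1 + 1) =
    ∑ m ∈ Finset.Icc 1 n,
      (Polynomial.X : Polynomial (MvPolynomial ℕ ℂ)) ^ (n - m) *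
        (1 - (Polynomial.X : Polynomial (MvPolynomial ℕ ℂ))) *
        (∏ i ∈ Finset.Icc 1 (m - 1), ee (i - 1) (m - 1) (m - i + 1)) *
        (∏ j ∈ Finset.Icc m (n - 1), ee (m - 1) j (j - m)) *
        (∏ p ∈ (pairsSet (n - 1)).filter (fun p => p.1 ≠ m ∧ p.2 ≠ m - 1),
          ee (p.1 - 1) p.2 (p.2 - p.1 + 1)) := by
  classical
  have hinj : Function.Injective (algebraMap (Polynomial (MvPolynomial ℕ ℂ))
      (FractionRing (Polynomial (MvPolynomial ℕ ℂ)))) := IsFractionRing.injective _ _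
  apply hinj
  simp only [map_mul, map_sub, map_one, map_pow, map_sum, map_prod, ee]
  set K := FractionRing (Polynomial (MvPolynomial ℕ ℂ)) with hKdef
  set φ := algebraMap (Polynomial (MvPolynomial ℕ ℂ)) K with hphidef
  set Z : K := φ Polynomial.X with hZdef
  set xe : ℕ → K := fun i => φ (Polynomial.C (MvPolynomial.X i)) with hxedef
  set w : ℕ → K := fun i => xe (i-1) * Z^i with hwdef
  have hZ : Z ≠ 0 := by
    intro h
    have : (Polynomial.X : Polynomial (MvPolynomial ℕ ℂ)) = 0 := hinj (by rw [map_zero]; exact h)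
    exact Polynomial.X_ne_zero this
  have hxe : ∀ i, xe i ≠ 0 := by
    intro i h
    have : (Polynomial.C (MvPolynomial.X i) : Polynomial (MvPolynomial ℕ ℂ)) = 0 :=
      hinj (by rw [map_zero]; exact h)
    rw [Polynomial.C_eq_zero] at this
    exact MvPolynomial.X_ne_zero i this
  have hwne : ∀ i ∈ Finset.Icc 1 n, w i ≠ 0 := fun i _ =>
    mul_ne_zero (hxe _) (pow_ne_zero _ hZ)
  have hwd : ∀ i ∈ Finset.Icc 1 n, ∀ j ∈ Finset.Icc 1 n, i ≠ j → w i ≠ w j := by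
    intro i _ j _ hij heq
    have h2 : (Polynomial.C (MvPolynomial.X (i-1)) * Polynomial.X ^ i :
        Polynomial (MvPolynomial ℕ ℂ)) = Polynomial.C (MvPolynomial.X (j-1)) * Polynomial.X ^ j := by
      apply hinj
      rw [map_mul, map_mul, map_pow, map_pow]
      exact heq
    have hc := congrArg (fun p => Polynomial.coeff p i) h2
    simp only [Polynomial.coeff_C_mul, Polynomial.coeff_X_pow, eq_self_iff_true, if_true,
      mul_one, if_neg hij, mul_zero] at hc
    exact MvPolynomial.X_ne_zero (i-1) hc
  have hstar := Pf.star n hn w Z hZ hwne hwd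
  have hsig : ∀ (s : Finset (ℕ×ℕ)) (g : ℕ×ℕ → K),
      ∏ p ∈ s.image (fun p : ℕ×ℕ => (p.1, p.2+1)), g p = ∏ p ∈ s, g (p.1, p.2+1) := by
    intro s g
    apply Finset.prod_image
    intro a _ b _ h
    simp only [Prod.mk.injEq] at h
    exact Prod.ext h.1 (by omega)
  -- LHS product
  have hPface : ∀ p ∈ pairsSet (n-1),
      xe (p.1-1) - xe p.2 * Z^(p.2-p.1+1) = (Z^p.1)⁻¹ * (w p.1 - w (p.2+1)) := by
    intro p hp
    obtain ⟨⟨ha, hb⟩, ⟨hc, hd2⟩, he⟩ := Pf.mem_pairsSet.mp hp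
    have h2 : w (p.2+1) = xe p.2 * (Z^(p.2-p.1+1) * Z^p.1) := by
      show xe (p.2+1-1) * Z^(p.2+1) = _
      rw [Nat.add_sub_cancel, ← pow_add]
      congr 2
      omega
    have h1 : w p.1 = xe (p.1-1) * Z^p.1 := rfl
    rw [h1, h2]
    have h4 : (Z^p.1) ≠ 0 := pow_ne_zero _ hZ
    calc xe (p.1-1) - xe p.2 * Z^(p.2-p.1+1)
        = ((Z^p.1)⁻¹ * Z^p.1) * (xe (p.1-1) - xe p.2 * Z^(p.2-p.1+1)) := by
          rw [inv_mul_cancel₀ h4, one_mul]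
      _ = (Z^p.1)⁻¹ * (xe (p.1-1) * Z^p.1 - xe p.2 * (Z^(p.2-p.1+1) * Z^p.1)) := by ring
  have hPprod : ∏ p ∈ pairsSet (n-1), (xe (p.1-1) - xe p.2 * Z^(p.2-p.1+1)) =
      (Z^(∑ p ∈ pairsSet (n-1), p.1))⁻¹ *
        ∏ p ∈ Pf.pairsLt (Finset.Icc 1 n), (w p.1 - w p.2) := by
    rw [Finset.prod_congr rfl hPface, Finset.prod_mul_distrib, ← Pf.himg1 n hn, hsig]
    congr 1
    rw [Finset.prod_inv_distrib, Finset.prod_pow_eq_pow_sum]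
  rw [hPprod]
  -- RHS terms
  have hterm : ∀ m ∈ Finset.Icc 1 n,
      Z^(n-m) * (1 - Z) *
        (∏ i ∈ Finset.Icc 1 (m-1), (xe (i-1) - xe (m-1) * Z^(m-i+1))) *
        (∏ j ∈ Finset.Icc m (n-1), (xe (m-1) - xe j * Z^(j-m))) *
        (∏ p ∈ Finset.filter (fun p => p.1 ≠ m ∧ p.2 ≠ m - 1) (pairsSet (n-1)),
          (xe (p.1-1) - xe p.2 * Z^(p.2-p.1+1))) =
      (Z^(∑ p ∈ pairsSet (n-1), p.1))⁻¹ *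
        ((1-Z) * (∏ i ∈ Finset.Icc 1 (m-1), (w i - Z * w m)) *
          (∏ j ∈ Finset.Icc (m+1) n, (Z * w m - w j)) *
          (∏ p ∈ Pf.pairsLt ((Finset.Icc 1 n).erase m), (w p.1 - w p.2))) := by
    intro m hm
    obtain ⟨hm1, hm2⟩ := Finset.mem_Icc.mp hm
    -- A
    have hAface : ∀ i ∈ Finset.Icc 1 (m-1),
        xe (i-1) - xe (m-1) * Z^(m-i+1) = (Z^i)⁻¹ * (w i - Z * w m) := by
      intro i hi
      obtain ⟨hi1, hi2⟩ := Finset.mem_Icc.mp hi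
      have h2 : Z * w m = xe (m-1) * (Z^(m-i+1) * Z^i) := by
        show Z * (xe (m-1) * Z^m) = _
        rw [← pow_add, show m-i+1+i = 1 + m by omega, pow_add, pow_one]
        ring
      have h1 : w i = xe (i-1) * Z^i := rfl
      rw [h1, h2]
      have h4 : (Z^i) ≠ 0 := pow_ne_zero _ hZ
      calc xe (i-1) - xe (m-1) * Z^(m-i+1)
          = ((Z^i)⁻¹ * Z^i) * (xe (i-1) - xe (m-1) * Z^(m-i+1)) := by
            rw [inv_mul_cancel₀ h4, one_mul]
        _ = (Z^i)⁻¹ * (xe (i-1) * Z^i - xe (m-1) * (Z^(m-i+1) * Z^i)) := by ring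
    have hAprod : ∏ i ∈ Finset.Icc 1 (m-1), (xe (i-1) - xe (m-1) * Z^(m-i+1)) =
        (Z^(∑ i ∈ Finset.Icc 1 (m-1), i))⁻¹ * ∏ i ∈ Finset.Icc 1 (m-1), (w i - Z * w m) := by
      rw [Finset.prod_congr rfl hAface, Finset.prod_mul_distrib]
      congr 1
      rw [Finset.prod_inv_distrib, Finset.prod_pow_eq_pow_sum]
    -- B
    have hBface : ∀ j ∈ Finset.Icc m (n-1),
        xe (m-1) - xe j * Z^(j-m) = (Z^(m+1))⁻¹ * (Z * w m - w (j+1)) := by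
      intro j hj
      obtain ⟨hj1, hj2⟩ := Finset.mem_Icc.mp hj
      have h2 : w (j+1) = xe j * (Z^(j-m) * Z^(m+1)) := by
        show xe (j+1-1) * Z^(j+1) = _
        rw [Nat.add_sub_cancel, ← pow_add]
        congr 2
        omega
      have h1 : Z * w m = xe (m-1) * Z^(m+1) := by
        show Z * (xe (m-1) * Z^m) = _
        rw [pow_succ]
        ring
      rw [h1, h2]
      have h4 : (Z^(m+1)) ≠ 0 := pow_ne_zero _ hZ
      calc xe (m-1) - xe j * Z^(j-m)
          = ((Z^(m+1))⁻¹ * Z^(m+1)) * (xe (m-1) - xe j * Z^(j-m)) := by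
            rw [inv_mul_cancel₀ h4, one_mul]
        _ = (Z^(m+1))⁻¹ * (xe (m-1) * Z^(m+1) - xe j * (Z^(j-m) * Z^(m+1))) := by ring
    have hBimg : Finset.Icc (m+1) n = (Finset.Icc m (n-1)).image (· + 1) := by
      rw [Finset.image_add_right_Icc]
      congr 1
      omega
    have hBprod : ∏ j ∈ Finset.Icc m (n-1), (xe (m-1) - xe j * Z^(j-m)) =
        (Z^((m+1)*(n-m)))⁻¹ * ∏ j ∈ Finset.Icc (m+1) n, (Z * w m - w j) := by
      rw [Finset.prod_congr rfl hBface, Finset.prod_mul_distrib, hBimg,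
        Finset.prod_image (by intro a _ b _ h; simp only at h; omega)]
      congr 1
      rw [Finset.prod_const, ← inv_pow, ← pow_mul, Nat.card_Icc,
        show (n - 1 + 1 - m) = n - m by omega, inv_pow]
    -- C
    have hCprod : ∏ p ∈ Finset.filter (fun p => p.1 ≠ m ∧ p.2 ≠ m - 1) (pairsSet (n-1)),
        (xe (p.1-1) - xe p.2 * Z^(p.2-p.1+1)) =
        (Z^(∑ p ∈ Finset.filter (fun p => p.1 ≠ m ∧ p.2 ≠ m - 1) (pairsSet (n-1)), p.1))⁻¹ *
          ∏ p ∈ Pf.pairsLt ((Finset.Icc 1 n).erase m), (w p.1 - w p.2) := by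
      rw [Finset.prod_congr rfl (fun p hp => hPface p (Finset.mem_filter.mp hp).1),
        Finset.prod_mul_distrib, ← Pf.hfe n m, ← Pf.himg2 n m hn hm1, hsig]
      congr 1
      rw [Finset.prod_inv_distrib, Finset.prod_pow_eq_pow_sum]
    rw [hAprod, hBprod, hCprod]
    -- exponent bookkeeping
    have hNat := Pf.hNat n m hn hm1 hm2
    have e1 : Z^(n-m) * ((Z^(∑ i ∈ Finset.Icc 1 (m-1), i))⁻¹ *
        ((Z^((m+1)*(n-m)))⁻¹ *
          (Z^(∑ p ∈ Finset.filter (fun p => p.1 ≠ m ∧ p.2 ≠ m - 1) (pairsSet (n-1)), p.1))⁻¹)) =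
        (Z^(∑ p ∈ pairsSet (n-1), p.1))⁻¹ := by
      rw [← mul_inv, ← pow_add, ← mul_inv, ← pow_add,
        show (∑ i ∈ Finset.Icc 1 (m-1), i) + ((m+1)*(n-m) +
          ∑ p ∈ Finset.filter (fun p => p.1 ≠ m ∧ p.2 ≠ m - 1) (pairsSet (n-1)), p.1) =
          (n-m) + ∑ p ∈ pairsSet (n-1), p.1 by rw [hNat]; ring,
        pow_add, mul_inv, ← mul_assoc, mul_inv_cancel₀ (pow_ne_zero _ hZ), one_mul]
    calc Z^(n-m) * (1 - Z) *
        ((Z^(∑ i ∈ Finset.Icc 1 (m-1), i))⁻¹ * ∏ i ∈ Finset.Icc 1 (m-1), (w i - Z * w m)) *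
        ((Z^((m+1)*(n-m)))⁻¹ * ∏ j ∈ Finset.Icc (m+1) n, (Z * w m - w j)) *
        ((Z^(∑ p ∈ Finset.filter (fun p => p.1 ≠ m ∧ p.2 ≠ m - 1) (pairsSet (n-1)), p.1))⁻¹ *
          ∏ p ∈ Pf.pairsLt ((Finset.Icc 1 n).erase m), (w p.1 - w p.2))
        = (Z^(n-m) * ((Z^(∑ i ∈ Finset.Icc 1 (m-1), i))⁻¹ *
            ((Z^((m+1)*(n-m)))⁻¹ *
            (Z^(∑ p ∈ Finset.filter (fun p => p.1 ≠ m ∧ p.2 ≠ m - 1) (pairsSet (n-1)), p.1))⁻¹))) *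
          ((1-Z) * (∏ i ∈ Finset.Icc 1 (m-1), (w i - Z * w m)) *
            (∏ j ∈ Finset.Icc (m+1) n, (Z * w m - w j)) *
            (∏ p ∈ Pf.pairsLt ((Finset.Icc 1 n).erase m), (w p.1 - w p.2))) := by ring
      _ = _ := by rw [e1]
  rw [Finset.sum_congr rfl hterm, ← Finset.mul_sum, ← hstar]
  ring
end

section
/- The Euler characteristic generating function for Quot schemes of P^1: Σ_{d≥0} χ(Quot_d(O^n → rank r quotients)) t^d = C(n, r) · (1-t)^{-2(n-r)}, i.e. χ(HQ_d(G^r(n))) = C(n,r) · Σ_{e=0}^{d} C(e + n - r - 1, n - r - 1) C(d - e + n - r - 1, n - r - 1). -/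
open PowerSeries Finset

-- stars and bars
lemma aux_card_sum (α : Type*) [Fintype α] [DecidableEq α] (d : ℕ) :
    Nat.card {f : α → ℕ // ∑ i, f i = d} = (Fintype.card α + d - 1).choose d := by
  rw [← Nat.card_congr (Sym.equivNatSumOfFintype α d), Nat.card_eq_fintype_card,
    Sym.card_sym_eq_choose]

-- strict mono count
lemma aux_card_sm (s n : ℕ) :
    Nat.card {f : Fin s → Fin n // StrictMono f} = n.choose s := by
  have e : {f : Fin s → Fin n // StrictMono f} ≃ {t : Finset (Fin n) // t.card = s} :=
    { toFun := fun f => ⟨Finset.univ.image f.1, by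
        rw [Finset.card_image_of_injective _ f.2.injective, Finset.card_univ, Fintype.card_fin]⟩
      invFun := fun t => ⟨t.1.orderEmbOfFin t.2, (t.1.orderEmbOfFin t.2).strictMono⟩
      left_inv := fun f => Subtype.ext
        (Finset.orderEmbOfFin_unique _ (fun x => Finset.mem_image_of_mem _ (Finset.mem_univ x)) f.2).symm
      right_inv := fun t => by
        ext1
        apply Finset.coe_injective
        rw [Finset.coe_image, Finset.coe_univ, Set.image_univ]
        exact Finset.range_orderEmbOfFin t.1 t.2 }
  rw [Nat.card_congr e, Nat.card_eq_fintype_card, Fintype.card_subtype]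
  rw [show (Finset.univ.filter fun t : Finset (Fin n) => t.card = s) = Finset.powersetCard s Finset.univ by
    rw [Finset.powersetCard_eq_filter, Finset.powerset_univ]]
  rw [Finset.card_powersetCard, Finset.card_univ, Fintype.card_fin]

lemma aux_inv_pow (m : ℕ) :
    ((1 - PowerSeries.X : PowerSeries ℚ)⁻¹) ^ m = (PowerSeries.invOneSubPow ℚ m).val := by
  have hc : (PowerSeries.constantCoeff (R := ℚ)) (1 - PowerSeries.X) ≠ 0 := by simp
  have h1 : ((1 - PowerSeries.X : PowerSeries ℚ)⁻¹) ^ m * (1 - PowerSeries.X) ^ m = 1 := by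
    rw [← mul_pow, PowerSeries.inv_mul_cancel _ hc, one_pow]
  have h2 : ((PowerSeries.invOneSubPow ℚ m).val) * (1 - PowerSeries.X) ^ m = 1 := by
    rw [← PowerSeries.invOneSubPow_inv_eq_one_sub_pow]
    exact (PowerSeries.invOneSubPow ℚ m).val_inv
  calc ((1 - PowerSeries.X : PowerSeries ℚ)⁻¹) ^ m
      = ((1 - PowerSeries.X : PowerSeries ℚ)⁻¹) ^ m * (((PowerSeries.invOneSubPow ℚ m).val) * (1 - PowerSeries.X) ^ m) := by rw [h2, mul_one]
    _ = (PowerSeries.invOneSubPow ℚ m).val * (((1 - PowerSeries.X : PowerSeries ℚ)⁻¹) ^ m * (1 - PowerSeries.X) ^ m) := by ring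
    _ = (PowerSeries.invOneSubPow ℚ m).val := by rw [h1, mul_one]

-- convolution identity
lemma aux_conv (s d : ℕ) (hs : 0 < s) :
    ∑ e ∈ Finset.range (d + 1),
      (e + s - 1).choose (s - 1) * (d - e + s - 1).choose (s - 1)
      = (2 * s + d - 1).choose d := by
  have key : ((PowerSeries.invOneSubPow ℚ s).val) * ((PowerSeries.invOneSubPow ℚ s).val)
      = (PowerSeries.invOneSubPow ℚ (s + s)).val := by
    rw [← aux_inv_pow, ← aux_inv_pow, pow_add]
  have hcoeff := congrArg (PowerSeries.coeff (R := ℚ) d) key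
  rw [PowerSeries.coeff_mul, PowerSeries.invOneSubPow_val_eq_mk_sub_one_add_choose_of_pos ℚ s hs,
    PowerSeries.invOneSubPow_val_eq_mk_sub_one_add_choose_of_pos ℚ (s+s) (by omega : 0 < s + s),
    Finset.Nat.sum_antidiagonal_eq_sum_range_succ_mk] at hcoeff
  simp only [PowerSeries.coeff_mk] at hcoeff
  have : ((∑ e ∈ Finset.range (d + 1),
      (e + s - 1).choose (s - 1) * (d - e + s - 1).choose (s - 1) : ℕ) : ℚ)
      = (((2 * s + d - 1).choose d : ℕ) : ℚ) := by
    push_cast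
    rw [show (2 * s + d - 1).choose d = (s + s - 1 + d).choose (s + s - 1) by
      rw [show 2 * s + d - 1 = s + s - 1 + d by omega]
      rw [← Nat.choose_symm (by omega : d ≤ s + s - 1 + d), Nat.add_sub_cancel]]
    rw [← hcoeff]
    apply Finset.sum_congr rfl
    intro e _
    rw [show e + s - 1 = s - 1 + e by omega, show d - e + s - 1 = s - 1 + (d - e) by omega]
  exact_mod_cast this

lemma aux_main_card (s n d : ℕ) :
    Nat.card {x : (Fin s → ℕ) × (Fin s → ℕ) × (Fin s → Fin n) //
        (∑ k, (x.1 k + x.2.1 k)) = d ∧ StrictMono x.2.2}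
      = (2 * s + d - 1).choose d * n.choose s := by
  have e1 : {x : (Fin s → ℕ) × (Fin s → ℕ) × (Fin s → Fin n) //
        (∑ k, (x.1 k + x.2.1 k)) = d ∧ StrictMono x.2.2}
      ≃ {p : (Fin s → ℕ) × (Fin s → ℕ) // (∑ k, (p.1 k + p.2 k)) = d} ×
        {c : Fin s → Fin n // StrictMono c} :=
    { toFun := fun x => (⟨(x.1.1, x.1.2.1), x.2.1⟩, ⟨x.1.2.2, x.2.2⟩)
      invFun := fun p => ⟨(p.1.1.1, p.1.1.2, p.2.1), p.1.2, p.2.2⟩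
      left_inv := fun x => rfl
      right_inv := fun p => rfl }
  have e2 : {f : Fin s ⊕ Fin s → ℕ // ∑ i, f i = d}
      ≃ {p : (Fin s → ℕ) × (Fin s → ℕ) // (∑ k, (p.1 k + p.2 k)) = d} :=
    Equiv.subtypeEquiv (Equiv.sumArrowEquivProdArrow (Fin s) (Fin s) ℕ) (by
      intro f
      simp [Equiv.sumArrowEquivProdArrow, Fintype.sum_sum_type, Finset.sum_add_distrib])
  rw [Nat.card_congr e1, Nat.card_prod, ← Nat.card_congr e2, aux_card_sum, aux_card_sm]
  congr 2
  simp [Fintype.card_sum]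
  omega




/-- Euler characteristic of the Quot scheme `HQ_d(G^r(n))`: the number of fixed-point
data `(a, b, c)` — sequences of length `s = n - r` with `a_k, b_k ≥ 0`,
`Σ (a_k + b_k) = d`, and `1 ≤ c_1 < ... < c_s ≤ n` — equals `C(n, r)` times the
coefficient of `t^d` in `(1-t)^{-2(n-r)}`; explicitly (for `r < n`) it is
`C(n,r) Σ_{e=0}^d C(e+n-r-1, n-r-1) C(d-e+n-r-1, n-r-1)`. -/
theorem stmt16 (n r d : ℕ) (hr : r ≤ n) :
    ((Nat.card {x : (Fin (n - r) → ℕ) × (Fin (n - r) → ℕ) × (Fin (n - r) → Fin n) //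
        (∑ k, (x.1 k + x.2.1 k)) = d ∧ StrictMono x.2.2} : ℚ) =
      (n.choose r : ℚ) *
        PowerSeries.coeff (R := ℚ) d (((1 - PowerSeries.X : PowerSeries ℚ))⁻¹ ^ (2 * (n - r)))) ∧
    (r < n →
      Nat.card {x : (Fin (n - r) → ℕ) × (Fin (n - r) → ℕ) × (Fin (n - r) → Fin n) //
        (∑ k, (x.1 k + x.2.1 k)) = d ∧ StrictMono x.2.2} =
      n.choose r * ∑ e ∈ Finset.range (d + 1),
        (e + (n - r) - 1).choose ((n - r) - 1) * (d - e + (n - r) - 1).choose ((n - r) - 1)) := by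
  set s := n - r with hs
  have hcard := aux_main_card s n d
  have hch : n.choose s = n.choose r := by rw [hs, Nat.choose_symm hr]
  constructor
  · rw [hcard, aux_inv_pow]
    rcases Nat.eq_zero_or_pos s with h0 | hpos
    · rw [h0] at hcard hch ⊢
      rw [mul_zero, PowerSeries.invOneSubPow_zero]
      simp only [Units.val_one, PowerSeries.coeff_one, Nat.choose_zero_right]
      rcases Nat.eq_zero_or_pos d with hd | hd
      · subst hd; simp [← hch]
      · rw [Nat.choose_eq_zero_of_lt (by omega)]
        simp [hd.ne']
    · rw [PowerSeries.invOneSubPow_val_eq_mk_sub_one_add_choose_of_pos ℚ (2*s) (by omega),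
        PowerSeries.coeff_mk]
      rw [show (2 * s + d - 1).choose d = (2 * s - 1 + d).choose (2 * s - 1) by
        rw [show 2 * s + d - 1 = 2 * s - 1 + d by omega,
          ← Nat.choose_symm (by omega : d ≤ 2 * s - 1 + d), Nat.add_sub_cancel], hch]
      push_cast
      ring
  · intro hrn
    have hpos : 0 < s := by omega
    rw [hcard, aux_conv s d hpos, hch]
    ring
end
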